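/- Pieri rule at the level of crystals/tableaux: for a partition λ with at most r parts and l ∈ ℕ, the map sending a pair (T, A) with T ∈ SSYT_r(λ) and A ∈ ℕ^r with Σ A_i = l to the tableau obtained by row-inserting into T the entry 1 exactly A_1 times, then 2 exactly A_2 times, ..., then r exactly A_r times, is a bijection onto ⊔_μ SSYT_r(μ), where μ ranges over partitions obtained from λ by adding l boxes with no two in the same column. -/

import Mathlib

namespace RSKPaper

/-- The shape of a tableau: its list of row lengths. -/
def shape (T : List (List ℕ)) : List ℕ := T.map List.length

/-- All entries of the tableau lie in `{1, ..., m}`. -/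
def EntriesIn (T : List (List ℕ)) (m : ℕ) : Prop :=
  ∀ row ∈ T, ∀ x ∈ row, 1 ≤ x ∧ x ≤ m

/-- `T` is a semistandard Young tableau: rows are nonempty and weakly increasing,
row lengths are weakly decreasing, and columns are strictly increasing. -/
def IsSSYT (T : List (List ℕ)) : Prop :=
  (∀ row ∈ T, row ≠ [] ∧ row.Pairwise (· ≤ ·)) ∧
  (∀ i, i + 1 < T.length →
    (T.getD (i+1) []).length ≤ (T.getD i []).length ∧
    ∀ k < (T.getD (i+1) []).length, (T.getD i []).getD k 0 < (T.getD (i+1) []).getD k 0)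

/-- Schensted row insertion of `x` into a single row: returns the new row and
the bumped entry, if any. -/
def insRow (x : ℕ) : List ℕ → List ℕ × Option ℕ
  | [] => ([x], none)
  | a :: as =>
      if a ≤ x then
        let p := insRow x as
        (a :: p.1, p.2)
      else (x :: as, some a)

/-- Schensted insertion of an entry into a tableau. -/
def insertT : List (List ℕ) → ℕ → List (List ℕ)
  | [], x => [[x]]
  | r :: rs, x =>
      match insRow x r with
      | (r', none) => r' :: rs
      | (r', some b) => r' :: insertT rs b

/-- Simultaneous insertion into the insertion tableau `P` and recording of the
label `lbl` at the new box of the recording tableau `Q`. -/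
def insPQ : List (List ℕ) → List (List ℕ) → ℕ → ℕ → List (List ℕ) × List (List ℕ)
  | [], _, x, lbl => ([[x]], [[lbl]])
  | r :: rs, qs, x, lbl =>
      match insRow x r with
      | (r', none) => (r' :: rs, (qs.headD [] ++ [lbl]) :: qs.tail)
      | (r', some b) =>
          let p := insPQ rs qs.tail b lbl
          (r' :: p.1, qs.headD [] :: p.2)

/-- One RSK step: insert the second coordinate, record the first. -/
def RSstep (PQ : List (List ℕ) × List (List ℕ)) (p : ℕ × ℕ) :
    List (List ℕ) × List (List ℕ) :=
  insPQ PQ.1 PQ.2 p.2 p.1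

/-- The two-line array of a matrix: the pair `(i, j)` (1-based) appears with
multiplicity `A i j`, listed in lexicographic order. -/
def biword {r n : ℕ} (A : Matrix (Fin r) (Fin n) ℕ) : List (ℕ × ℕ) :=
  (List.finRange r).flatMap fun i =>
    (List.finRange n).flatMap fun j =>
      List.replicate (A i j) (i.val + 1, j.val + 1)

/-- The Robinson–Schensted–Knuth correspondence: `RSK A = (P A, Q A)`. -/
def RSK {r n : ℕ} (A : Matrix (Fin r) (Fin n) ℕ) :
    List (List ℕ) × List (List ℕ) :=
  (biword A).foldl RSstep ([], [])

/-- The Robinson–Schensted correspondence on permutations: row-insert the word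
`w 1, ..., w n`, recording positions. -/
def RS {n : ℕ} (w : Equiv.Perm (Fin n)) : List (List ℕ) × List (List ℕ) :=
  ((List.finRange n).map (fun k => (k.val + 1, (w k).val + 1))).foldl RSstep ([], [])

/-- The target of RSK: pairs of semistandard tableaux of the same shape, with
entries of the first in `{1,...,n}` and of the second in `{1,...,r}`. -/
def RSKTarget (r n : ℕ) : Set (List (List ℕ) × List (List ℕ)) :=
  {pq | IsSSYT pq.1 ∧ IsSSYT pq.2 ∧ shape pq.1 = shape pq.2 ∧
    EntriesIn pq.1 n ∧ EntriesIn pq.2 r}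

/-! Crystal operators via the signature (bracketing) rule. -/

/-- One step of bracket matching: `true` is an unmatched plus pushed on the stack,
`false` is a minus which cancels the most recent unmatched plus if one exists. -/
def sigStep (st : List ℕ × List ℕ) (p : ℕ × Bool) : List ℕ × List ℕ :=
  if p.2 then (p.1 :: st.1, st.2)
  else
    match st.1 with
    | [] => ([], st.2 ++ [p.1])
    | _ :: ps => (ps, st.2)

/-- Bracket matching: returns (unmatched pluses, newest first; unmatched minuses, oldest first). -/
def matchSig (l : List (ℕ × Bool)) : List ℕ × List ℕ := l.foldl sigStep ([], [])

/-- Position acted upon by the lowering operator `f`. -/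
def fIdx (l : List (ℕ × Bool)) : Option ℕ := (matchSig l).1.head?

/-- Position acted upon by the raising operator `e`. -/
def eIdx (l : List (ℕ × Bool)) : Option ℕ := (matchSig l).2.head?

/-- Signature word of a matrix for the `i`-th crystal operator: the columns are the
tensor factors, column `j` contributing `ε = A (i+1) j` minuses and `φ = A i j` pluses. -/
def matSig {r n : ℕ} (i : ℕ) (hi : i + 1 < r) (A : Matrix (Fin r) (Fin n) ℕ) :
    List (ℕ × Bool) :=
  (List.finRange n).flatMap fun j =>
    List.replicate (A ⟨i+1, hi⟩ j) (j.val, false) ++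
      List.replicate (A ⟨i, by omega⟩ j) (j.val, true)

/-- Crystal lowering operator `f_i` on `Mat_{r×n}(ℕ)`: moves one unit from row `i`
to row `i+1` in the selected column (1-based crystal index `i ∈ {1,...,r-1}`,
here 0-based as `i` acting on rows `i, i+1`). -/
def matF {r n : ℕ} (i : ℕ) (A : Matrix (Fin r) (Fin n) ℕ) :
    Option (Matrix (Fin r) (Fin n) ℕ) :=
  if hi : i + 1 < r then
    (fIdx (matSig i hi A)).map fun jj =>
      Matrix.of fun i' j' =>
        if j'.val = jj then
          if i'.val = i then A i' j' - 1
          else if i'.val = i + 1 then A i' j' + 1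
          else A i' j'
        else A i' j'
  else none

/-- Crystal raising operator `e_i` on `Mat_{r×n}(ℕ)`. -/
def matE {r n : ℕ} (i : ℕ) (A : Matrix (Fin r) (Fin n) ℕ) :
    Option (Matrix (Fin r) (Fin n) ℕ) :=
  if hi : i + 1 < r then
    (eIdx (matSig i hi A)).map fun jj =>
      Matrix.of fun i' j' =>
        if j'.val = jj then
          if i'.val = i then A i' j' + 1
          else if i'.val = i + 1 then A i' j' - 1
          else A i' j'
        else A i' j'
  else none

/-- Cut a word into rows of the given lengths. -/
def reshape : List ℕ → List ℕ → List (List ℕ)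
  | [], _ => []
  | l :: ls, w => w.take l :: reshape ls (w.drop l)

/-- Signature word of a tableau for the `i`-th crystal operator (letters `i+1` are
pluses, letters `i+2` are minuses), reading the tableau row by row. -/
def tabSig (i : ℕ) (T : List (List ℕ)) : List (ℕ × Bool) :=
  (T.flatten.zipIdx.map Prod.swap).filterMap fun p =>
    if p.2 = i + 1 then some (p.1, true)
    else if p.2 = i + 2 then some (p.1, false) else none

/-- Crystal lowering operator `f_i` on semistandard tableaux: changes one entry
`i+1` into `i+2`. -/
def tabF (i : ℕ) (T : List (List ℕ)) : Option (List (List ℕ)) :=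
  (fIdx (tabSig i T)).map fun k => reshape (shape T) (T.flatten.set k (i + 2))

/-- Crystal raising operator `e_i` on semistandard tableaux: changes one entry
`i+2` into `i+1`. -/
def tabE (i : ℕ) (T : List (List ℕ)) : Option (List (List ℕ)) :=
  (eIdx (tabSig i T)).map fun k => reshape (shape T) (T.flatten.set k (i + 1))

/-- Restriction of a tableau: remove all boxes with entry `> m`. -/
def restrict (m : ℕ) (T : List (List ℕ)) : List (List ℕ) :=
  (T.map fun row => row.filter (· ≤ m)).filter (· ≠ [])

end RSKPaper

namespace RSKPaper

/-- The `i`-th part of a partition given as a list of row lengths (0 beyond the end). -/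
def part (l : List ℕ) (i : ℕ) : ℕ := l.getD i 0

/-- `l` is a partition shape: weakly decreasing positive parts. -/
def IsShape (l : List ℕ) : Prop := l.Pairwise (· ≥ ·) ∧ ∀ x ∈ l, 0 < x

/-- `mu ⊆ l` and the skew shape `l \ mu` is a horizontal strip (at most one box in
every column), expressed by the interlacing condition. -/
def IsHStrip (mu l : List ℕ) : Prop :=
  ∀ i, part l (i + 1) ≤ part mu i ∧ part mu i ≤ part l i

/-- Row-insert into `T` the entry `1` exactly `A 1` times, then `2` exactly `A 2`
times, ..., then `r` exactly `A r` times. -/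
def multiInsert {r : ℕ} (T : List (List ℕ)) (A : Fin r → ℕ) : List (List ℕ) :=
  ((List.finRange r).flatMap fun i => List.replicate (A i) (i.val + 1)).foldl insertT T

/-! ### Auxiliary machinery for the Pieri rule -/

open List in
lemma sorted_getD_le {l : List ℕ} (h : l.Pairwise (· ≤ ·)) {i j : ℕ} (hij : i ≤ j)
    (hj : j < l.length) : l.getD i 0 ≤ l.getD j 0 := by
  rcases eq_or_lt_of_le hij with rfl | hij
  · rfl
  · rw [List.getD_eq_getElem _ _ (lt_trans hij hj), List.getD_eq_getElem _ _ hj]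
    exact h.rel_get_of_lt (by exact hij)

lemma getD_mem {l : List ℕ} {k : ℕ} (h : k < l.length) : l.getD k 0 ∈ l := by
  rw [List.getD_eq_getElem _ _ h]; exact List.getElem_mem h

lemma insRow_none_eq {x : ℕ} {row : List ℕ}
    (h : row.dropWhile (fun a => decide (a ≤ x)) = []) :
    insRow x row = (row ++ [x], none) := by
  induction row with
  | nil => rfl
  | cons a as ih =>
    rw [List.dropWhile_cons] at h
    by_cases hax : a ≤ x
    · simp only [hax, decide_eq_true_eq, if_true] at h
      simp [insRow, hax, ih h]
    · simp [hax] at h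
lemma insRow_some_eq {x b : ℕ} {row v : List ℕ}
    (h : row.dropWhile (fun a => decide (a ≤ x)) = b :: v) :
    insRow x row = (row.takeWhile (fun a => decide (a ≤ x)) ++ x :: v, some b) := by
  induction row with
  | nil => simp at h
  | cons a as ih =>
    rw [List.dropWhile_cons] at h
    by_cases hax : a ≤ x
    · simp only [hax, decide_eq_true_eq, if_true] at h
      simp [insRow, hax, ih h, List.takeWhile_cons]
    · simp only [hax, decide_eq_false_iff_not, if_false] at h
      obtain ⟨rfl, rfl⟩ := by simpa using h
      simp [insRow, hax, List.takeWhile_cons]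

/-- Row domination: the lower row `b` fits strictly under `a`. -/
def dominates (a b : List ℕ) : Prop :=
  b.length ≤ a.length ∧ ∀ k < b.length, a.getD k 0 < b.getD k 0

lemma dominates_nil (a : List ℕ) : dominates a [] := ⟨Nat.zero_le _, by simp⟩

lemma isSSYT_nil : IsSSYT ([] : List (List ℕ)) := ⟨by simp, by simp⟩

lemma isSSYT_cons {a : List ℕ} {T : List (List ℕ)} :
    IsSSYT (a :: T) ↔ (a ≠ [] ∧ a.Pairwise (· ≤ ·)) ∧ dominates a (T.getD 0 []) ∧ IsSSYT T := by
  constructor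
  · rintro ⟨h1, h2⟩
    refine ⟨h1 a (by simp), ?_, fun row hr => h1 row (by simp [hr]), fun i hi => ?_⟩
    · rcases T with _ | ⟨b, T⟩
      · exact dominates_nil a
      · exact h2 0 (by simp)
    · exact h2 (i+1) (by simpa using hi)
  · rintro ⟨⟨h1, h2⟩, hd, h3, h4⟩
    refine ⟨?_, ?_⟩
    · intro row hr
      rcases List.mem_cons.mp hr with rfl | hr
      · exact ⟨h1, h2⟩
      · exact h3 row hr
    · intro i hi
      match i with
      | 0 => exact hd
      | (i+1) => exact h4 i (by simpa using hi)
lemma mem_takeWhile_le {x a : ℕ} {row : List ℕ}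
    (h : a ∈ row.takeWhile (fun a => decide (a ≤ x))) : a ≤ x := by
  simpa using List.mem_takeWhile_imp h

lemma dropWhile_head_gt {x b : ℕ} {row v : List ℕ}
    (h : row.dropWhile (fun a => decide (a ≤ x)) = b :: v) : x < b := by
  induction row with
  | nil => simp at h
  | cons a as ih =>
    rw [List.dropWhile_cons] at h
    by_cases hax : a ≤ x
    · simp only [hax, decide_eq_true_eq, if_true] at h
      exact ih h
    · simp only [hax, decide_eq_false_iff_not, if_false] at h
      cases h; omega

lemma prefix_getD {l₁ l₂ : List ℕ} (h : l₁ <+: l₂) {k : ℕ} (hk : k < l₁.length) :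
    l₂.getD k 0 = l₁.getD k 0 := by
  obtain ⟨t, rfl⟩ := h
  rw [List.getD_append _ _ _ _ hk]

/-- decomposition of a sorted row by `takeWhile (· ≤ x)`. -/
lemma sorted_decomp {x b : ℕ} {row v : List ℕ} (hs : row.Pairwise (· ≤ ·))
    (h : row.dropWhile (fun a => decide (a ≤ x)) = b :: v) :
    row = row.takeWhile (fun a => decide (a ≤ x)) ++ b :: v ∧
    (row.takeWhile (fun a => decide (a ≤ x))).Pairwise (· ≤ ·) ∧
    (b :: v).Pairwise (· ≤ ·) ∧
    (∀ a ∈ row.takeWhile (fun a => decide (a ≤ x)), ∀ c ∈ b :: v, a ≤ c) ∧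
    x < b := by
  have hr : row.takeWhile (fun a => decide (a ≤ x)) ++ b :: v = row := by
    rw [← h]; exact List.takeWhile_append_dropWhile
  have hp : List.Pairwise (· ≤ ·) (row.takeWhile (fun a => decide (a ≤ x)) ++ b :: v) := by
    rw [hr]; exact hs
  rw [List.pairwise_append] at hp
  exact ⟨hr.symm, hp.1, hp.2.1, hp.2.2, dropWhile_head_gt h⟩

/-- Row index of the new box created by `insertT T x`. -/
def insIdx : List (List ℕ) → ℕ → ℕ
  | [], _ => 0
  | r :: rs, x =>
      match insRow x r with
      | (_, none) => 0
      | (_, some b) => insIdx rs b + 1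

/-- Column index of the new box created by `insertT T x`. -/
def insCol (T : List (List ℕ)) (x : ℕ) : ℕ := part (shape T) (insIdx T x)

/-- Adding a box at the end of row `i` of a shape. -/
def addBox (s : List ℕ) (i : ℕ) : List ℕ :=
  if i < s.length then s.set i (s.getD i 0 + 1) else s ++ [1]

lemma addBox_cons_succ (a : ℕ) (s : List ℕ) (i : ℕ) :
    addBox (a :: s) (i + 1) = a :: addBox s i := by
  simp only [addBox, List.length_cons, Nat.add_lt_add_iff_right, List.getD_cons_succ]
  split <;> simp_all

lemma part_nil (i : ℕ) : part [] i = 0 := by simp [part]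

lemma part_cons_succ (a : ℕ) (s : List ℕ) (i : ℕ) : part (a :: s) (i + 1) = part s i := by
  simp [part]

lemma part_cons_zero (a : ℕ) (s : List ℕ) : part (a :: s) 0 = a := by simp [part]

lemma part_eq_zero {s : List ℕ} {i : ℕ} (h : s.length ≤ i) : part s i = 0 :=
  List.getD_eq_default _ _ h

lemma part_addBox : ∀ {s : List ℕ} {i : ℕ}, i ≤ s.length → ∀ j,
    part (addBox s i) j = part s j + if j = i then 1 else 0 := by
  intro s
  induction s with
  | nil =>
    intro i hi j
    have : i = 0 := by simpa using hi
    subst this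
    cases j <;> simp [part, addBox]
  | cons a s ih =>
    intro i hi j
    match i with
    | 0 =>
      have h0 : addBox (a :: s) 0 = (a+1) :: s := by simp [addBox]
      rw [h0]
      cases j <;> simp [part_cons_zero, part_cons_succ]
    | (i+1) =>
      rw [addBox_cons_succ]
      cases j with
      | zero => simp [part_cons_zero]
      | succ j =>
        rw [part_cons_succ, part_cons_succ, ih (by simpa using hi) j]
        simp [Nat.succ_inj]

lemma sum_addBox : ∀ {s : List ℕ} {i : ℕ}, i ≤ s.length → (addBox s i).sum = s.sum + 1 := by
  intro s
  induction s with
  | nil =>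
    intro i hi
    have : i = 0 := by simpa using hi
    subst this; rfl
  | cons a s ih =>
    intro i hi
    match i with
    | 0 =>
      have h0 : addBox (a :: s) 0 = (a+1) :: s := by simp [addBox]
      rw [h0]; simp; omega
    | (i+1) =>
      rw [addBox_cons_succ, List.sum_cons, List.sum_cons, ih (by simpa using hi)]
      omega

lemma length_addBox (s : List ℕ) (i : ℕ) :
    (addBox s i).length = if i < s.length then s.length else s.length + 1 := by
  unfold addBox; split <;> simp
lemma insertT_none_eq {x : ℕ} {r : List ℕ} {rs : List (List ℕ)}
    (h : r.dropWhile (fun a => decide (a ≤ x)) = []) :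
    insertT (r :: rs) x = (r ++ [x]) :: rs ∧ insIdx (r :: rs) x = 0 :=
  ⟨by simp [insertT, insRow_none_eq h], by simp [insIdx, insRow_none_eq h]⟩

lemma insertT_some_eq {x b : ℕ} {r v : List ℕ} {rs : List (List ℕ)}
    (h : r.dropWhile (fun a => decide (a ≤ x)) = b :: v) :
    insertT (r :: rs) x = (r.takeWhile (fun a => decide (a ≤ x)) ++ x :: v) :: insertT rs b ∧
    insIdx (r :: rs) x = insIdx rs b + 1 :=
  ⟨by simp [insertT, insRow_some_eq h], by simp [insIdx, insRow_some_eq h]⟩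

lemma entriesIn_cons {r : List ℕ} {rs : List (List ℕ)} {m : ℕ} :
    EntriesIn (r :: rs) m ↔ (∀ a ∈ r, 1 ≤ a ∧ a ≤ m) ∧ EntriesIn rs m := by
  constructor
  · intro h
    exact ⟨h r (by simp), fun row hrow => h row (by simp [hrow])⟩
  · rintro ⟨h1, h2⟩ row hrow
    rcases List.mem_cons.mp hrow with rfl | hrow
    · exact h1
    · exact h2 row hrow

lemma insert_step {m : ℕ} : ∀ {T : List (List ℕ)}, IsSSYT T → ∀ x,
    IsSSYT (insertT T x) ∧ insIdx T x ≤ T.length ∧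
    shape (insertT T x) = addBox (shape T) (insIdx T x) ∧
    (EntriesIn T m → 1 ≤ x → x ≤ m → EntriesIn (insertT T x) m) := by
  intro T
  induction T with
  | nil =>
    intro _ x
    refine ⟨?_, by simp [insIdx], by simp [insertT, shape, insIdx, addBox], ?_⟩
    · show IsSSYT [[x]]
      rw [isSSYT_cons]
      exact ⟨⟨by simp, by simp⟩, by simpa using dominates_nil _, isSSYT_nil⟩
    · intro _ h1 h2 row hr a ha
      simp only [insertT, List.mem_singleton] at hr
      subst hr
      simp only [List.mem_singleton] at ha
      subst ha
      exact ⟨h1, h2⟩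
  | cons r rs ih =>
    intro hT x
    rw [isSSYT_cons] at hT
    obtain ⟨⟨hrne, hrs⟩, hdom, hT'⟩ := hT
    cases hdw : r.dropWhile (fun a => decide (a ≤ x)) with
    | nil =>
      obtain ⟨he, hidx⟩ := insertT_none_eq (rs := rs) hdw
      have hall : ∀ a ∈ r, a ≤ x := by
        intro a ha
        simpa using List.dropWhile_eq_nil_iff.mp hdw a ha
      rw [he, hidx]
      refine ⟨?_, by simp, ?_, ?_⟩
      · rw [isSSYT_cons]
        refine ⟨⟨by simp, ?_⟩, ⟨le_trans hdom.1 (by simp), fun k hk => ?_⟩, hT'⟩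
        · refine List.pairwise_append.mpr ⟨hrs, by simp, ?_⟩
          intro a ha c hc
          simp only [List.mem_singleton] at hc
          subst hc
          exact hall a ha
        · rw [List.getD_append _ _ _ _ (lt_of_lt_of_le hk hdom.1)]
          exact hdom.2 k hk
      · simp [shape, addBox]
      · intro hE h1 h2
        rw [entriesIn_cons] at hE ⊢
        refine ⟨?_, hE.2⟩
        intro a ha
        rcases List.mem_append.mp ha with ha | ha
        · exact hE.1 a ha
        · simp only [List.mem_singleton] at ha
          subst ha
          exact ⟨h1, h2⟩
    | cons b v =>
      obtain ⟨he, hidx⟩ := insertT_some_eq (rs := rs) hdw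
      obtain ⟨hre, hu, hbv, hcross, hxb⟩ := sorted_decomp hrs hdw
      set u := r.takeWhile (fun a => decide (a ≤ x)) with hu_def
      set p := u.length with hp_def
      have hub : ∀ a ∈ u, a ≤ x := fun a ha => mem_takeWhile_le ha
      have hvb : ∀ c ∈ v, b ≤ c := (List.pairwise_cons.mp hbv).1
      have hrlen : r.length = p + (v.length + 1) := by rw [hre]; simp [hp_def]
      have hr1len : (u ++ x :: v).length = r.length := by rw [hrlen]; simp [hp_def]
      have hrp : r.getD p 0 = b := by
        rw [hre, List.getD_append_right _ _ _ _ (le_refl _)]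
        simp
      have hr1_le : ∀ k, (u ++ x :: v).getD k 0 ≤ r.getD k 0 := by
        intro k
        rcases lt_trichotomy k p with hk | rfl | hk
        · rw [List.getD_append _ _ _ _ hk, hre, List.getD_append _ _ _ _ hk]
        · rw [List.getD_append_right _ _ _ _ (le_refl _), hrp]
          simpa using le_of_lt hxb
        · rw [List.getD_append_right _ _ _ _ (le_of_lt hk), hre,
            List.getD_append_right _ _ _ _ (le_of_lt hk)]
          have : k - p = (k - p - 1) + 1 := by omega
          rw [this]
          simp
      have hr1_lt : ∀ k ≤ p, (u ++ x :: v).getD k 0 < b := by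
        intro k hk
        rcases eq_or_lt_of_le hk with rfl | hk
        · rw [List.getD_append_right _ _ _ _ (le_refl _)]
          simpa using hxb
        · rw [List.getD_append _ _ _ _ hk]
          exact lt_of_le_of_lt (hub _ (getD_mem hk)) hxb
      have hbmem : b ∈ r := by rw [hre]; simp
      obtain ⟨ihS, ihI, ihsh, ihE⟩ := ih hT' b
      rw [he, hidx]
      have hr1sorted : (u ++ x :: v).Pairwise (· ≤ ·) := by
        refine List.pairwise_append.mpr ⟨hu, ?_, ?_⟩
        · exact List.pairwise_cons.mpr
            ⟨fun c hc => le_of_lt (lt_of_lt_of_le hxb (hvb c hc)), (List.pairwise_cons.mp hbv).2⟩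
        · intro a ha c hc
          rcases List.mem_cons.mp hc with rfl | hc
          · exact hub a ha
          · exact le_trans (hub a ha) (le_of_lt (lt_of_lt_of_le hxb (hvb c hc)))
      have hdom1 : dominates (u ++ x :: v) ((insertT rs b).getD 0 []) := by
        cases rs with
        | nil =>
          show dominates _ ([[b]].getD 0 [])
          refine ⟨by simp only [List.getD_cons_zero, List.length_singleton, hr1len, hrlen]; omega,
            fun k hk => ?_⟩
          simp only [List.getD_cons_zero, List.length_cons, List.length_nil] at hk ⊢
          have : k = 0 := by omega
          subst this
          simpa using hr1_lt 0 (Nat.zero_le _)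
        | cons s ss =>
          have hdom' : dominates r s := by simpa using hdom
          have hss : s.Pairwise (· ≤ ·) := ((isSSYT_cons.mp hT').1).2
          cases hdw2 : s.dropWhile (fun a => decide (a ≤ b)) with
          | nil =>
            obtain ⟨he2, _⟩ := insertT_none_eq (rs := ss) hdw2
            rw [he2]
            have hall2 : ∀ a ∈ s, a ≤ b := by
              intro a ha
              simpa using List.dropWhile_eq_nil_iff.mp hdw2 a ha
            have hsp : s.length ≤ p := by
              by_contra hc
              push_neg at hc
              have h1 := hdom'.2 p hc
              rw [hrp] at h1
              exact absurd (hall2 _ (getD_mem hc)) (not_le.mpr h1)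
            refine ⟨?_, fun k hk => ?_⟩
            · simp only [List.getD_cons_zero, List.length_append, List.length_singleton, hr1len]
              omega
            · simp only [List.getD_cons_zero, List.length_append, List.length_singleton] at hk ⊢
              rcases Nat.lt_succ_iff_lt_or_eq.mp hk with hk | rfl
              · rw [List.getD_append _ _ _ _ hk]
                exact lt_of_le_of_lt (hr1_le k) (hdom'.2 k hk)
              · rw [List.getD_append_right _ _ _ _ (le_refl _)]
                simpa using hr1_lt s.length hsp
          | cons b₂ w =>
            obtain ⟨he2, _⟩ := insertT_some_eq (rs := ss) hdw2
            rw [he2]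
            obtain ⟨hse, hu2, hb2w, hcross2, hbb2⟩ := sorted_decomp hss hdw2
            set u₂ := s.takeWhile (fun a => decide (a ≤ b)) with hu2_def
            set q := u₂.length with hq_def
            have hslen : s.length = q + (w.length + 1) := by rw [hse]; simp [hq_def]
            have hqp : q ≤ p := by
              by_contra hc
              push_neg at hc
              have hps : p < s.length := by
                have := (List.takeWhile_prefix (l := s) (fun a => decide (a ≤ b))).length_le
                omega
              have h1 := hdom'.2 p hps
              rw [hrp] at h1
              have h2 : s.getD p 0 ≤ b := by
                have := prefix_getD (List.takeWhile_prefix (l := s) _) (k := p) hc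
                rw [← hu2_def] at this
                rw [this]
                exact mem_takeWhile_le (getD_mem hc)
              omega
            have hs1len : (u₂ ++ b :: w).length = s.length := by rw [hslen]; simp [hq_def]
            have hs1_eq : ∀ k, k ≠ q → (u₂ ++ b :: w).getD k 0 = s.getD k 0 := by
              intro k hkq
              rcases lt_or_gt_of_ne hkq with hk | hk
              · rw [List.getD_append _ _ _ _ hk, hse, List.getD_append _ _ _ _ hk]
              · rw [List.getD_append_right _ _ _ _ (le_of_lt hk), hse,
                  List.getD_append_right _ _ _ _ (le_of_lt hk)]
                have : k - q = (k - q - 1) + 1 := by omega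
                rw [this]
                simp
            have hs1q : (u₂ ++ b :: w).getD q 0 = b := by
              rw [List.getD_append_right _ _ _ _ (le_refl _)]
              simp
            refine ⟨?_, fun k hk => ?_⟩
            · simp only [List.getD_cons_zero, hs1len, hr1len]
              exact hdom'.1
            · simp only [List.getD_cons_zero] at hk ⊢
              rw [hs1len] at hk
              rcases eq_or_ne k q with rfl | hkq
              · rw [hs1q]
                exact hr1_lt q hqp
              · rw [hs1_eq k hkq]
                exact lt_of_le_of_lt (hr1_le k) (hdom'.2 k hk)
      refine ⟨?_, by simpa using Nat.succ_le_succ ihI, ?_, ?_⟩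
      · rw [isSSYT_cons]
        exact ⟨⟨by simp, hr1sorted⟩, hdom1, ihS⟩
      · show _ :: shape (insertT rs b) = addBox (r.length :: shape rs) (insIdx rs b + 1)
        rw [addBox_cons_succ, ihsh, ← hr1len]

      · intro hE h1 h2
        rw [entriesIn_cons] at hE ⊢
        obtain ⟨hEb1, hEb2⟩ := hE.1 b hbmem
        refine ⟨?_, ihE hE.2 hEb1 hEb2⟩
        intro a ha
        rcases List.mem_append.mp ha with ha | ha
        · exact hE.1 a (by rw [hre]; simp [ha])
        · rcases List.mem_cons.mp ha with rfl | ha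
          · exact ⟨h1, h2⟩
          · exact hE.1 a (by rw [hre]; simp [ha])
def insPos (row : List ℕ) (x : ℕ) : ℕ := (row.takeWhile (fun a => decide (a ≤ x))).length

lemma insPos_le_length (row : List ℕ) (x : ℕ) : insPos row x ≤ row.length :=
  (List.takeWhile_prefix _).length_le

lemma insPos_lower_le {s r : List ℕ} {b p : ℕ} (hd : dominates r s) (hb : r.getD p 0 = b) :
    insPos s b ≤ p := by
  by_contra hc
  push_neg at hc
  have hps : p < s.length := lt_of_lt_of_le hc (insPos_le_length s b)
  have h1 := hd.2 p hps
  have h2 : s.getD p 0 ≤ b := by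
    rw [prefix_getD (List.takeWhile_prefix _) hc]
    exact mem_takeWhile_le (getD_mem hc)
  omega

lemma insCol_cons_none {x : ℕ} {r : List ℕ} {rs : List (List ℕ)}
    (h : r.dropWhile (fun a => decide (a ≤ x)) = []) :
    insCol (r :: rs) x = r.length := by
  have := (insertT_none_eq (rs := rs) h).2
  simp [insCol, this, shape, part]

lemma insCol_cons_some {x b : ℕ} {r v : List ℕ} {rs : List (List ℕ)}
    (h : r.dropWhile (fun a => decide (a ≤ x)) = b :: v) :
    insCol (r :: rs) x = insCol rs b := by
  have := (insertT_some_eq (rs := rs) h).2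
  simp only [insCol, this, shape, List.map_cons, part_cons_succ]

lemma getD_takeWhile_eq {x : ℕ} {r : List ℕ} {b : ℕ} {v : List ℕ}
    (hs : r.Pairwise (· ≤ ·)) (h : r.dropWhile (fun a => decide (a ≤ x)) = b :: v) :
    r.getD (insPos r x) 0 = b := by
  obtain ⟨hre, -, -, -, -⟩ := sorted_decomp hs h
  set w := r.takeWhile (fun a => decide (a ≤ x)) with hw
  show r.getD w.length 0 = b
  rw [hre, List.getD_append_right _ _ _ _ (le_refl _)]
  simp

lemma insCol_le_insPos : ∀ {T : List (List ℕ)}, IsSSYT T → ∀ x,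
    insCol T x ≤ insPos (T.getD 0 []) x := by
  intro T
  induction T with
  | nil => intro _ x; simp [insCol, insIdx, shape, part]
  | cons r rs ih =>
    intro hT x
    rw [isSSYT_cons] at hT
    obtain ⟨⟨hrne, hrs⟩, hdom, hT'⟩ := hT
    cases hdw : r.dropWhile (fun a => decide (a ≤ x)) with
    | nil =>
      rw [insCol_cons_none hdw]
      have : r.takeWhile (fun a => decide (a ≤ x)) = r := by
        have := List.takeWhile_append_dropWhile (p := fun a => decide (a ≤ x)) (l := r)
        rw [hdw] at this
        simpa using this
      simp [insPos, this]
    | cons b v =>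
      rw [insCol_cons_some hdw]
      calc insCol rs b ≤ insPos (rs.getD 0 []) b := ih hT' b
        _ ≤ insPos r x := insPos_lower_le hdom (getD_takeWhile_eq hrs hdw)

/-- Row bumping lemma, first half: inserting `x` then `y` with `x ≤ y`, the second
box is strictly to the right of the first. -/
lemma bump_right : ∀ {T : List (List ℕ)}, IsSSYT T → ∀ {x y : ℕ}, x ≤ y →
    insCol T x < insCol (insertT T x) y := by
  intro T
  induction T with
  | nil =>
    intro _ x y hxy
    show insCol [] x < insCol [[x]] y
    have h1 : insCol ([] : List (List ℕ)) x = 0 := by simp [insCol, insIdx, shape, part]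
    have h2 : ([x].dropWhile (fun a => decide (a ≤ y))) = [] := by simp [hxy]
    rw [h1, insCol_cons_none h2]
    simp
  | cons r rs ih =>
    intro hT x y hxy
    rw [isSSYT_cons] at hT
    obtain ⟨⟨hrne, hrs⟩, hdom, hT'⟩ := hT
    cases hdw : r.dropWhile (fun a => decide (a ≤ x)) with
    | nil =>
      rw [insCol_cons_none hdw, (insertT_none_eq (rs := rs) hdw).1]
      have hall : ∀ a ∈ r, a ≤ x := by
        intro a ha
        simpa using List.dropWhile_eq_nil_iff.mp hdw a ha
      have h2 : ((r ++ [x]).dropWhile (fun a => decide (a ≤ y))) = [] := by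
        rw [List.dropWhile_eq_nil_iff]
        intro a ha
        rcases List.mem_append.mp ha with ha | ha
        · simpa using le_trans (hall a ha) hxy
        · simp only [List.mem_singleton] at ha
          subst ha
          simpa using hxy
      rw [insCol_cons_none h2]
      simp
    | cons b v =>
      obtain ⟨hre, hu, hbv, hcross, hxb⟩ := sorted_decomp hrs hdw
      set u := r.takeWhile (fun a => decide (a ≤ x)) with hu_def
      have hvb : ∀ c ∈ v, b ≤ c := (List.pairwise_cons.mp hbv).1
      have hub : ∀ a ∈ u, a ≤ x := fun a ha => mem_takeWhile_le ha
      rw [insCol_cons_some hdw, (insertT_some_eq (rs := rs) hdw).1]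
      cases hdw2 : (u ++ x :: v).dropWhile (fun a => decide (a ≤ y)) with
      | nil =>
        rw [insCol_cons_none hdw2]
        have hp : insPos r x < r.length := by
          have h1 : insPos r x = u.length := rfl
          rw [h1, hre]
          simp
        calc insCol rs b ≤ insPos (rs.getD 0 []) b := insCol_le_insPos hT' b
          _ ≤ insPos r x := insPos_lower_le hdom (getD_takeWhile_eq hrs hdw)
          _ < r.length := hp
          _ = (u ++ x :: v).length := by rw [hre]; simp
      | cons b₂ w =>
        rw [insCol_cons_some hdw2]
        have hb2 : b ≤ b₂ := by
          have hA : ((u ++ [x]).dropWhile (fun a => decide (a ≤ y))) = [] := by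
            rw [List.dropWhile_eq_nil_iff]
            intro a ha
            rcases List.mem_append.mp ha with ha | ha
            · simpa using le_trans (hub a ha) hxy
            · simp only [List.mem_singleton] at ha
              subst ha
              simpa using hxy
          have heq : u ++ x :: v = (u ++ [x]) ++ v := by simp
          rw [heq, List.dropWhile_append, hA] at hdw2
          simp only [List.isEmpty_nil, if_true] at hdw2
          have : b₂ ∈ v := by
            have := (List.dropWhile_sublist (l := v) (fun a => decide (a ≤ y))).mem
              (a := b₂) (by rw [hdw2]; simp)
            exact this
          exact hvb b₂ this
        exact ih hT' hb2

/-- Row bumping lemma, second half: inserting `x` then `y` with `y < x`, the second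
box is weakly to the left of the first. -/
lemma bump_left : ∀ {T : List (List ℕ)}, IsSSYT T → ∀ {x y : ℕ}, y < x →
    insCol (insertT T x) y ≤ insCol T x := by
  intro T
  induction T with
  | nil =>
    intro _ x y hyx
    show insCol [[x]] y ≤ insCol [] x
    have h2 : ([x].dropWhile (fun a => decide (a ≤ y))) = [x] := by
      rw [List.dropWhile_cons]
      simp [Nat.not_le.mpr hyx]
    rw [insCol_cons_some h2]
  | cons r rs ih =>
    intro hT x y hyx
    rw [isSSYT_cons] at hT
    obtain ⟨⟨hrne, hrs⟩, hdom, hT'⟩ := hT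
    cases hdw : r.dropWhile (fun a => decide (a ≤ x)) with
    | nil =>
      rw [insCol_cons_none hdw, (insertT_none_eq (rs := rs) hdw).1]
      cases hdw2 : ((r ++ [x]).dropWhile (fun a => decide (a ≤ y))) with
      | nil =>
        exact absurd (by simpa using List.dropWhile_eq_nil_iff.mp hdw2 x (by simp))
          (Nat.not_le.mpr hyx)
      | cons b₂ w =>
        rw [insCol_cons_some hdw2]
        calc insCol rs b₂ ≤ insPos (rs.getD 0 []) b₂ := insCol_le_insPos hT' b₂
          _ ≤ (rs.getD 0 []).length := insPos_le_length _ _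
          _ ≤ r.length := hdom.1
    | cons b v =>
      obtain ⟨hre, hu, hbv, hcross, hxb⟩ := sorted_decomp hrs hdw
      set u := r.takeWhile (fun a => decide (a ≤ x)) with hu_def
      have hub : ∀ a ∈ u, a ≤ x := fun a ha => mem_takeWhile_le ha
      rw [insCol_cons_some hdw, (insertT_some_eq (rs := rs) hdw).1]
      cases hdw2 : (u ++ x :: v).dropWhile (fun a => decide (a ≤ y)) with
      | nil =>
        exact absurd (by simpa using List.dropWhile_eq_nil_iff.mp hdw2 x (by simp))
          (Nat.not_le.mpr hyx)
      | cons b₂ w =>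
        rw [insCol_cons_some hdw2]
        have hb2 : b₂ < b := by
          have hA : ((u ++ [x]).dropWhile (fun a => decide (a ≤ y))) ≠ [] := by
            intro h
            have := List.dropWhile_eq_nil_iff.mp h x (by simp)
            simp at this
            omega
          cases hA' : ((u ++ [x]).dropWhile (fun a => decide (a ≤ y))) with
          | nil => exact absurd hA' hA
          | cons c cw =>
            have heq : u ++ x :: v = (u ++ [x]) ++ v := by simp
            rw [heq, List.dropWhile_append, hA'] at hdw2
            simp only [List.isEmpty_cons, if_false] at hdw2
            rw [List.cons_append] at hdw2
            have hcb : c = b₂ := (List.cons.injEq _ _ _ _ ▸ hdw2).1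
            have hcmem : c ∈ u ++ [x] :=
              (List.dropWhile_sublist (fun a => decide (a ≤ y))).mem (by rw [hA']; simp)
            have hcx : c ≤ x := by
              rcases List.mem_append.mp hcmem with hc | hc
              · exact hub c hc
              · simp only [List.mem_singleton] at hc
                subst hc; rfl
            omega
        exact ih hT' hb2
/-- Reverse bumping in a row: replace the rightmost entry `< b` by `b`,
returning the new row and the replaced entry. -/
def delRow (b : ℕ) (row : List ℕ) : List ℕ × ℕ :=
  let k := (row.takeWhile (fun a => decide (a < b))).length
  (row.take (k-1) ++ b :: row.drop k, row.getD (k-1) 0)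

/-- Reverse bumping: remove the box at the end of row `i`, bumping entries upward. -/
def delT : List (List ℕ) → ℕ → List (List ℕ) × ℕ
  | [], _ => ([], 0)
  | r :: rs, 0 =>
      ((if r.length ≤ 1 then [] else [r.dropLast]) ++ rs, r.getD (r.length - 1) 0)
  | r :: rs, (i+1) =>
      let p := delT rs i
      let q := delRow p.2 r
      (q.1 :: p.1, q.2)

lemma dropWhile_eq_drop_takeWhile (p : ℕ → Bool) :
    ∀ l : List ℕ, l.dropWhile p = l.drop (l.takeWhile p).length := by
  intro l
  induction l with
  | nil => rfl
  | cons a l ih =>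
    rw [List.dropWhile_cons, List.takeWhile_cons]
    by_cases h : p a
    · simp [h, ih]
    · simp [h]

/-- Reverse bumping undoes insertion. -/
lemma delT_insertT : ∀ {T : List (List ℕ)}, IsSSYT T → ∀ x,
    delT (insertT T x) (insIdx T x) = (T, x) := by
  intro T
  induction T with
  | nil =>
    intro _ x
    show delT [[x]] 0 = ([], x)
    simp [delT]
  | cons r rs ih =>
    intro hT x
    rw [isSSYT_cons] at hT
    obtain ⟨⟨hrne, hrs⟩, hdom, hT'⟩ := hT
    cases hdw : r.dropWhile (fun a => decide (a ≤ x)) with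
    | nil =>
      rw [(insertT_none_eq (rs := rs) hdw).1, (insertT_none_eq (rs := rs) hdw).2]
      show ((if (r ++ [x]).length ≤ 1 then [] else [(r ++ [x]).dropLast]) ++ rs,
        (r ++ [x]).getD ((r ++ [x]).length - 1) 0) = (r :: rs, x)
      have h1 : ¬ (r ++ [x]).length ≤ 1 := by
        simp only [List.length_append, List.length_singleton]
        have := List.length_pos_iff.mpr hrne
        omega
      rw [if_neg h1]
      have h2 : (r ++ [x]).dropLast = r := List.dropLast_concat ..
      have h3 : (r ++ [x]).getD ((r ++ [x]).length - 1) 0 = x := by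
        simp only [List.length_append, List.length_singleton, Nat.add_sub_cancel]
        rw [List.getD_append_right _ _ _ _ (le_refl _)]
        simp
      rw [h2, h3]
      simp
    | cons b v =>
      obtain ⟨hre, hu, hbv, hcross, hxb⟩ := sorted_decomp hrs hdw
      set u := r.takeWhile (fun a => decide (a ≤ x)) with hu_def
      have hub : ∀ a ∈ u, a ≤ x := fun a ha => mem_takeWhile_le ha
      have hvb : ∀ c ∈ v, b ≤ c := (List.pairwise_cons.mp hbv).1
      rw [(insertT_some_eq (rs := rs) hdw).1, (insertT_some_eq (rs := rs) hdw).2]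
      show (let p := delT (insertT rs b) (insIdx rs b);
            let q := delRow p.2 (u ++ x :: v); (q.1 :: p.1, q.2)) = (r :: rs, x)
      rw [ih hT' b]
      show ((delRow b (u ++ x :: v)).1 :: rs, (delRow b (u ++ x :: v)).2) = (r :: rs, x)
      have htw : (u ++ x :: v).takeWhile (fun a => decide (a < b)) = u ++ [x] := by
        have h1 : (u ++ [x]).takeWhile (fun a => decide (a < b)) = u ++ [x] := by
          rw [List.takeWhile_eq_self_iff]
          intro a ha
          rcases List.mem_append.mp ha with ha | ha
          · simpa using lt_of_le_of_lt (hub a ha) hxb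
          · simp only [List.mem_singleton] at ha
            subst ha
            simpa using hxb
        have heq : u ++ x :: v = (u ++ [x]) ++ v := by simp
        rw [heq, List.takeWhile_append, h1]
        simp only [if_pos rfl]
        cases v with
        | nil => simp
        | cons c cs =>
          rw [List.takeWhile_cons]
          have : ¬ c < b := not_lt.mpr (hvb c (by simp))
          simp [this]
      have hklen : (u ++ [x]).length = u.length + 1 := by simp
      unfold delRow
      rw [htw, hklen]
      simp only [Nat.add_sub_cancel]
      have ht1 : (u ++ x :: v).take u.length = u := by
        have : u ++ x :: v = (u ++ [x]) ++ v := by simp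
        rw [List.take_append_of_le_length (by simp)]
        simp
      have ht2 : (u ++ x :: v).drop (u.length + 1) = v := by
        have heq : u ++ x :: v = (u ++ [x]) ++ v := by simp
        rw [heq]
        have : (u ++ [x]).length = u.length + 1 := by simp
        rw [← this, List.drop_left]
      have ht3 : (u ++ x :: v).getD u.length 0 = x := by
        rw [List.getD_append_right _ _ _ _ (le_refl _)]
        simp
      rw [ht1, ht2, ht3, ← hre]
lemma part_shape_getD (T : List (List ℕ)) (i : ℕ) :
    part (shape T) i = (T.getD i []).length := by
  unfold part shape
  rcases lt_or_ge i T.length with h | h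
  · rw [List.getD_eq_getElem _ _ (by simpa using h), List.getD_eq_getElem _ _ h]
    simp
  · rw [List.getD_eq_default _ _ (by simpa using h), List.getD_eq_default _ _ h]
    rfl

lemma head_sorted {T : List (List ℕ)} (hT : IsSSYT T) :
    (T.getD 0 []).Pairwise (· ≤ ·) := by
  cases T with
  | nil => simp
  | cons r rs => exact (isSSYT_cons.mp hT).1.2

lemma getD_middle {A B : List ℕ} {x : ℕ} : (A ++ x :: B).getD A.length 0 = x := by
  rw [List.getD_append_right _ _ _ _ (le_refl _)]
  simp

lemma getD_middle_eq {A B : List ℕ} (x y : ℕ) {j : ℕ} (h : j ≠ A.length) :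
    (A ++ x :: B).getD j 0 = (A ++ y :: B).getD j 0 := by
  rcases lt_or_gt_of_ne h with hj | hj
  · rw [List.getD_append _ _ _ _ hj, List.getD_append _ _ _ _ hj]
  · rw [List.getD_append_right _ _ _ _ (le_of_lt hj),
      List.getD_append_right _ _ _ _ (le_of_lt hj)]
    have : j - A.length = (j - A.length - 1) + 1 := by omega
    rw [this]
    simp

lemma head_dropWhile_false {p : ℕ → Bool} : ∀ {l v : List ℕ} {b : ℕ},
    l.dropWhile p = b :: v → p b = false := by
  intro l
  induction l with
  | nil => intro v b h; simp at h
  | cons a as ih =>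
    intro v b h
    rw [List.dropWhile_cons] at h
    by_cases ha : p a
    · simp only [ha, if_true] at h
      exact ih h
    · simp only [ha, if_false] at h
      cases h
      simpa using ha

lemma le_length_takeWhile {p : ℕ → Bool} : ∀ {l : List ℕ} {n : ℕ}, n ≤ l.length →
    (∀ j < n, p (l.getD j 0)) → n ≤ (l.takeWhile p).length := by
  intro l
  induction l with
  | nil => intro n hn _; simpa using hn
  | cons a as ih =>
    intro n hn hp
    match n with
    | 0 => exact Nat.zero_le _
    | (n+1) =>
      have ha : p a := by simpa using hp 0 (by omega)
      rw [List.takeWhile_cons, if_pos ha]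
      simp only [List.length_cons]
      exact Nat.succ_le_succ (ih (by simpa using hn) (fun j hj => by simpa using hp (j+1) (by omega)))

/-- Full specification of reverse bumping at an outer corner. -/
lemma delT_spec : ∀ {T : List (List ℕ)} {i : ℕ}, IsSSYT T → i < T.length →
    part (shape T) (i+1) < part (shape T) i →
    IsSSYT (delT T i).1 ∧
    insertT (delT T i).1 (delT T i).2 = T ∧
    shape (delT T i).1 = (if part (shape T) i = 1 then (shape T).take i
      else (shape T).set i (part (shape T) i - 1)) ∧
    (∃ j₀ < (T.getD 0 []).length,
      (delT T i).2 = (T.getD 0 []).getD j₀ 0 ∧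
      (∀ j < ((delT T i).1.getD 0 []).length, j ≠ j₀ →
        ((delT T i).1.getD 0 []).getD j 0 = (T.getD 0 []).getD j 0) ∧
      (∀ j, j₀ ≤ j → j < ((delT T i).1.getD 0 []).length →
        (delT T i).2 < ((delT T i).1.getD 0 []).getD j 0) ∧
      ((delT T i).1.getD 0 []).length ≤ (T.getD 0 []).length) ∧
    (∀ m, EntriesIn T m → EntriesIn (delT T i).1 m ∧ 1 ≤ (delT T i).2 ∧ (delT T i).2 ≤ m) := by
  intro T
  induction T with
  | nil => intro i _ hi; simp at hi
  | cons r rs ih =>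
    intro i hT hi hc
    rw [isSSYT_cons] at hT
    obtain ⟨⟨hrne, hrs⟩, hdom, hT'⟩ := hT
    have hsh : shape (r :: rs) = r.length :: shape rs := rfl
    match i with
    | 0 =>
      rw [hsh, part_cons_zero, part_cons_succ, part_shape_getD] at hc
      by_cases hr1 : r.length ≤ 1
      · -- the first row has a single box; the tableau is `[r]`
        have hrs0 : rs = [] := by
          cases rs with
          | nil => rfl
          | cons s ss =>
            exfalso
            have hsne : s ≠ [] := (isSSYT_cons.mp hT').1.1
            have : 1 ≤ s.length := List.length_pos_iff.mpr hsne
            simp only [List.getD_cons_zero] at hc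
            omega
        subst hrs0
        obtain ⟨a, ha⟩ : ∃ a, r = [a] := by
          cases r with
          | nil => exact absurd rfl hrne
          | cons a r' =>
            cases r' with
            | nil => exact ⟨a, rfl⟩
            | cons c r'' => simp at hr1
        subst ha
        refine ⟨isSSYT_nil, rfl, ?_, ⟨0, by simp, by simp [delT], by simp [delT], ?_, by simp [delT]⟩, ?_⟩
        · simp [delT, shape, part]
        · intro j h1 h2
          simp [delT, shape] at h2
        · intro m hE
          have := hE [a] (by simp)
          simp only [delT]
          refine ⟨fun row hrow => ?_, ?_, ?_⟩
          · simp at hrow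
          · simpa using (this a (by simp)).1
          · simpa using (this a (by simp)).2
      · -- remove the last entry of the first row
        push_neg at hr1
        set x := r.getD (r.length - 1) 0 with hx_def
        have hlast : r.dropLast ++ [x] = r := by
          have h1 := List.dropLast_append_getLast hrne
          rwa [List.getLast_eq_getElem, ← List.getD_eq_getElem r 0 (by omega)] at h1
        have hdel : delT (r :: rs) 0 = (r.dropLast :: rs, x) := by
          show ((if r.length ≤ 1 then [] else [r.dropLast]) ++ rs, r.getD (r.length - 1) 0) = _
          rw [if_neg (by omega)]
          rfl
        rw [hdel]
        have hdll : r.dropLast.length = r.length - 1 := List.length_dropLast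
        have hdlgetD : ∀ j < r.length - 1, r.dropLast.getD j 0 = r.getD j 0 := by
          intro j hj
          conv_rhs => rw [← hlast]
          rw [List.getD_append _ _ _ _ (by omega)]
        have hall : ∀ c ∈ r.dropLast, c ≤ x := by
          intro c hc'
          obtain ⟨j, hj, rfl⟩ := List.mem_iff_getElem.mp hc'
          rw [hdll] at hj
          have : r.dropLast[j] = r.dropLast.getD j 0 := (List.getD_eq_getElem _ _ (by omega)).symm
          rw [this, hdlgetD j hj]
          exact sorted_getD_le hrs (by omega) (by omega)
        have hdw : (r.dropLast.dropWhile (fun a => decide (a ≤ x))) = [] :=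
          List.dropWhile_eq_nil_iff.mpr (fun c hc' => by simpa using hall c hc')
        refine ⟨?_, ?_, ?_, ⟨r.length - 1, by simp; omega, by rw [List.getD_cons_zero], ?_, ?_, by simp [hdll]⟩, ?_⟩
        · rw [isSSYT_cons]
          refine ⟨⟨by rw [← List.length_pos_iff, hdll]; omega, hrs.sublist (List.dropLast_sublist r)⟩,
            ⟨?_, fun k hk => ?_⟩, hT'⟩
          · rw [hdll]
            omega
          · rw [hdlgetD k (by omega)]
            exact hdom.2 k hk
        · rw [(insertT_none_eq (rs := rs) hdw).1, hlast]
        · rw [hsh, part_cons_zero]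
          rw [if_neg (by omega)]
          show r.dropLast.length :: shape rs = _
          rw [hdll]
          simp
        · intro j hj _
          simp only [List.getD_cons_zero] at hj ⊢
          rw [hdll] at hj
          exact hdlgetD j hj
        · intro j hj1 hj2
          simp only [List.getD_cons_zero, hdll] at hj2
          omega
        · intro m hE
          rw [entriesIn_cons] at hE ⊢
          exact ⟨⟨fun c hc' => hE.1 c ((List.dropLast_sublist r).mem hc'), hE.2⟩,
            (hE.1 x (getD_mem (by omega))).1, (hE.1 x (getD_mem (by omega))).2⟩
    | (i+1) =>
      have hi' : i < rs.length := by simpa using hi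
      have hc' : part (shape rs) (i+1) < part (shape rs) i := by
        rw [hsh, part_cons_succ, part_cons_succ] at hc
        exact hc
      obtain ⟨ihS, ihIns, ihsh, ⟨j₀, hj₀len, hbval, hnew_eq, hnew_gt, hlen2⟩, ihE⟩ :=
        ih hT' hi' hc'
      set b := (delT rs i).2 with hb_def
      set rs' := (delT rs i).1 with hrs'_def
      set old2 := rs.getD 0 [] with hold2
      set new2 := rs'.getD 0 [] with hnew2
      have hold2sorted : old2.Pairwise (· ≤ ·) := head_sorted hT'
      have hold2r : old2.length ≤ r.length := hdom.1
      have hrb0 : r.getD 0 0 < b := by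
        have h1 := hdom.2 0 (by omega)
        have h2 : old2.getD 0 0 ≤ old2.getD j₀ 0 :=
          sorted_getD_le hold2sorted (Nat.zero_le _) hj₀len
        rw [hbval]
        omega
      set k := (r.takeWhile (fun a => decide (a < b))).length with hk_def
      have hkle : k ≤ r.length := (List.takeWhile_prefix _).length_le
      have htw_take : r.takeWhile (fun a => decide (a < b)) = r.take k :=
        List.prefix_iff_eq_take.mp (List.takeWhile_prefix _)
      have hk1 : 1 ≤ k := by
        apply le_length_takeWhile (by omega)
        intro j hj
        have : j = 0 := by omega
        subst this
        simpa using hrb0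
      have hj₀k : j₀ + 1 ≤ k := by
        apply le_length_takeWhile (by omega)
        intro j hj
        have h1 := hdom.2 j (by omega)
        have h2 : old2.getD j 0 ≤ old2.getD j₀ 0 :=
          sorted_getD_le hold2sorted (by omega) hj₀len
        rw [hbval]
        simp only [decide_eq_true_eq]
        omega
      set x := r.getD (k-1) 0 with hx_def
      have hxb : x < b := by
        have h1 := prefix_getD (List.takeWhile_prefix (l := r) (fun a => decide (a < b)))
          (k := k-1) (by omega)
        rw [hx_def, h1]
        have := List.mem_takeWhile_imp (getD_mem (l := r.takeWhile (fun a => decide (a < b)))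
          (k := k-1) (by omega))
        simpa using this
      have htake : r.take k = r.take (k-1) ++ [x] := by
        have h1 : k = (k-1) + 1 := by omega
        conv_lhs => rw [h1]
        rw [List.take_succ, List.getElem?_eq_getElem (show k-1 < r.length by omega)]
        rw [hx_def, List.getD_eq_getElem _ _ (show k-1 < r.length by omega)]
        rfl
      have hr_eq : r = r.take (k-1) ++ x :: r.drop k := by
        conv_lhs => rw [← List.take_append_drop k r, htake]
        simp
      have hlen_take : (r.take (k-1)).length = k - 1 := by
        rw [List.length_take]
        omega
      have hdropb : ∀ c ∈ r.drop k, b ≤ c := by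
        have hdw3 : r.dropWhile (fun a => decide (a < b)) = r.drop k := by
          rw [dropWhile_eq_drop_takeWhile, ← hk_def]
        cases hv : r.drop k with
        | nil => intro c hc; simp at hc
        | cons c cs =>
          have hcb : ¬ c < b := by
            simpa using head_dropWhile_false (hdw3.trans hv)
          have hsorted : (c :: cs).Pairwise (· ≤ ·) := by
            rw [← hv]
            exact hrs.sublist (List.drop_sublist _ _)
          intro d hd
          rcases List.mem_cons.mp hd with rfl | hd
          · omega
          · have := (List.pairwise_cons.mp hsorted).1 d hd
            omega
      have htkel : ∀ c ∈ r.take (k-1), c ≤ x := by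
        intro c hc
        obtain ⟨j, hj, rfl⟩ := List.mem_iff_getElem.mp hc
        have hj' : j < k - 1 := by rw [hlen_take] at hj; exact hj
        rw [List.getElem_take, ← List.getD_eq_getElem r 0 (by omega), hx_def]
        exact sorted_getD_le hrs (by omega) (by omega)
      have htkel' : ∀ c ∈ r.take (k-1), c < b := by
        intro c hc
        have hmem : c ∈ r.takeWhile (fun a => decide (a < b)) := by
          rw [htw_take, htake]
          exact List.mem_append_left _ hc
        simpa using List.mem_takeWhile_imp hmem
      have hdelRow : delRow b r = (r.take (k-1) ++ b :: r.drop k, x) := rfl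
      have hdel : delT (r :: rs) (i+1) = ((r.take (k-1) ++ b :: r.drop k) :: rs', x) := by
        show ((delRow (delT rs i).2 r).1 :: (delT rs i).1, (delRow (delT rs i).2 r).2) = _
        rw [← hb_def, ← hrs'_def, hdelRow]
      rw [hdel]
      set A := r.take (k-1) with hA_def
      set D := r.drop k with hD_def
      set r' := A ++ b :: D with hr'_def
      have hr'len : r'.length = r.length := by
        conv_rhs => rw [hr_eq]
        simp [hr'_def]
      have hgetD_eq : ∀ j, j ≠ k-1 → r'.getD j 0 = r.getD j 0 := by
        intro j hj
        conv_rhs => rw [hr_eq]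
        exact getD_middle_eq b x (by rw [hlen_take]; omega)
      have hgetD_mid : r'.getD (k-1) 0 = b := by
        have := getD_middle (A := A) (B := D) (x := b)
        rwa [hlen_take] at this
      have hdrop_ge : ∀ j, k ≤ j → j < r.length → b ≤ r.getD j 0 := by
        intro j hjk hjr
        have h1 : r.getD j 0 = D.getD (j - k) 0 := by
          conv_lhs => rw [hr_eq]
          rw [List.getD_append_right _ _ _ _ (by rw [hlen_take]; omega), hlen_take]
          have : j - (k-1) = (j - k) + 1 := by omega
          rw [this, List.getD_cons_succ]
        have hD : j - k < D.length := by
          rw [hD_def, List.length_drop]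
          omega
        rw [h1]
        exact hdropb _ (getD_mem hD)
      refine ⟨?_, ?_, ?_, ⟨k-1, by simp; omega, by rw [List.getD_cons_zero], ?_, ?_, ?_⟩, ?_⟩
      · -- IsSSYT
        rw [isSSYT_cons]
        refine ⟨⟨by simp [hr'_def], ?_⟩, ⟨?_, fun j hj => ?_⟩, ihS⟩
        · refine List.pairwise_append.mpr ⟨hrs.sublist (List.take_sublist _ _), ?_, ?_⟩
          · exact List.pairwise_cons.mpr ⟨hdropb, hrs.sublist (List.drop_sublist _ _)⟩
          · intro a ha c hc
            rcases List.mem_cons.mp hc with rfl | hc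
            · exact le_of_lt (htkel' a ha)
            · exact le_trans (le_of_lt (htkel' a ha)) (hdropb c hc)
        · show new2.length ≤ r'.length
          rw [hr'len]
          omega
        · show r'.getD j 0 < new2.getD j 0
          rcases eq_or_ne j (k-1) with rfl | hne
          · rw [hgetD_mid]
            exact hnew_gt (k-1) (by omega) hj
          · rw [hgetD_eq j hne]
            have h1 : r.getD j 0 < old2.getD j 0 := hdom.2 j (lt_of_lt_of_le hj hlen2)
            rcases eq_or_ne j j₀ with rfl | hjj
            · have h2 : b < new2.getD j 0 := hnew_gt j (le_refl _) hj
              rw [hbval] at *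
              omega
            · rw [hnew_eq j hj hjj]
              exact h1
      · -- insertT inverse
        have hdwA : A.dropWhile (fun a => decide (a ≤ x)) = [] :=
          List.dropWhile_eq_nil_iff.mpr (fun c hc => by simpa using htkel c hc)
        have hdwr' : r'.dropWhile (fun a => decide (a ≤ x)) = b :: D := by
          rw [hr'_def, List.dropWhile_append, hdwA]
          simp only [List.isEmpty_nil, if_true]
          rw [List.dropWhile_cons]
          simp [Nat.not_le.mpr hxb]
        have htwr' : r'.takeWhile (fun a => decide (a ≤ x)) = A := by
          have h2 := List.takeWhile_append_dropWhile (p := fun a => decide (a ≤ x)) (l := r')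
          rw [hdwr'] at h2
          conv_rhs at h2 => rw [hr'_def]
          exact List.append_cancel_right h2
        rw [(insertT_some_eq (rs := rs') hdwr').1, htwr', ihIns, ← hr_eq]
      · -- shape
        show r'.length :: shape rs' = _
        rw [hr'len, hsh, part_cons_succ, ihsh]
        by_cases h1 : part (shape rs) i = 1
        · rw [if_pos h1, if_pos h1, List.take_succ_cons]
        · rw [if_neg h1, if_neg h1, List.set_cons_succ]
      · -- head: equality away from k-1
        intro j hj hne
        simp only [List.getD_cons_zero] at hj ⊢
        exact hgetD_eq j hne
      · -- head: strictness at and after k-1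
        intro j hj1 hj2
        simp only [List.getD_cons_zero] at hj2 ⊢
        rcases eq_or_lt_of_le hj1 with rfl | hj1
        · rw [hgetD_mid]
          exact hxb
        · rw [hgetD_eq j (by omega)]
          have := hdrop_ge j (by omega) (by rw [hr'len] at hj2; exact hj2)
          omega
      · -- head: length
        simp only [List.getD_cons_zero]
        rw [hr'len]
      · -- entries
        intro m hE
        rw [entriesIn_cons] at hE ⊢
        obtain ⟨hEr, hErs⟩ := hE
        obtain ⟨hErs', hb1, hbm⟩ := ihE m hErs
        refine ⟨⟨?_, hErs'⟩, ?_, ?_⟩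
        · intro c hc
          rcases List.mem_append.mp hc with hc | hc
          · exact hEr c ((List.take_sublist _ _).mem hc)
          · rcases List.mem_cons.mp hc with rfl | hc
            · exact ⟨hb1, hbm⟩
            · exact hEr c ((List.drop_sublist _ _).mem hc)
        · exact (hEr x (getD_mem (by omega))).1
        · exact (hEr x (getD_mem (by omega))).2
/-- Insertion of a word (left to right). -/
def insW (T : List (List ℕ)) (w : List ℕ) : List (List ℕ) := w.foldl insertT T

/-- The boxes (row, column) created by inserting a word. -/
def boxList : List (List ℕ) → List ℕ → List (ℕ × ℕ)
  | _, [] => []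
  | T, a :: w => (insIdx T a, insCol T a) :: boxList (insertT T a) w

lemma insW_nil (T : List (List ℕ)) : insW T [] = T := rfl
lemma insW_cons (T : List (List ℕ)) (a : ℕ) (w : List ℕ) :
    insW T (a :: w) = insW (insertT T a) w := rfl
lemma insW_append (T : List (List ℕ)) (w₁ w₂ : List ℕ) :
    insW T (w₁ ++ w₂) = insW (insW T w₁) w₂ := List.foldl_append ..

lemma boxList_append : ∀ (w₁ : List ℕ) (T : List (List ℕ)) (w₂ : List ℕ),
    boxList T (w₁ ++ w₂) = boxList T w₁ ++ boxList (insW T w₁) w₂ := by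
  intro w₁
  induction w₁ with
  | nil => intro T w₂; rfl
  | cons a w ih =>
    intro T w₂
    show (insIdx T a, insCol T a) :: boxList (insertT T a) (w ++ w₂) = _
    rw [ih]
    rfl

lemma shape_length (T : List (List ℕ)) : (shape T).length = T.length := by simp [shape]

lemma ssyt_part_succ_le {T : List (List ℕ)} (hT : IsSSYT T) (i : ℕ) :
    part (shape T) (i+1) ≤ part (shape T) i := by
  rcases lt_or_ge (i+1) T.length with h | h
  · rw [part_shape_getD, part_shape_getD]
    exact (hT.2 i h).1
  · rw [part_eq_zero (by rw [shape_length]; omega)]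
    exact Nat.zero_le _

lemma ssyt_part_mono {T : List (List ℕ)} (hT : IsSSYT T) {i j : ℕ} (h : i ≤ j) :
    part (shape T) j ≤ part (shape T) i := by
  have key : ∀ d, part (shape T) (i + d) ≤ part (shape T) i := by
    intro d
    induction d with
    | zero => rfl
    | succ d ih => exact le_trans (ssyt_part_succ_le hT (i + d)) ih
  have : j = i + (j - i) := by omega
  rw [this]
  exact key _

lemma pairwise_snd_ne : ∀ {l : List (ℕ × ℕ)}, (l.map Prod.snd).Pairwise (· < ·) →
    ∀ p ∈ l, ∀ q ∈ l, p ≠ q → p.2 ≠ q.2 := by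
  intro l
  induction l with
  | nil => intro _ p hp; simp at hp
  | cons a l ih =>
    intro h p hp q hq hne
    rw [List.map_cons, List.pairwise_cons] at h
    rcases List.mem_cons.mp hp with hpa | hp'
    · rcases List.mem_cons.mp hq with hqa | hq'
      · exact absurd (hpa.trans hqa.symm) hne
      · rw [hpa]
        exact ne_of_lt (h.1 q.2 (List.mem_map_of_mem hq'))
    · rcases List.mem_cons.mp hq with hqa | hq'
      · rw [hqa]
        exact (ne_of_lt (h.1 p.2 (List.mem_map_of_mem hp'))).symm
      · exact ih h.2 p hp' q hq' hne

/-- Master lemma on inserting a weakly increasing word. -/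
lemma insW_spec {m : ℕ} : ∀ {w : List ℕ} {T : List (List ℕ)}, IsSSYT T →
    w.Pairwise (· ≤ ·) → (∀ a ∈ w, 1 ≤ a ∧ a ≤ m) → EntriesIn T m →
    IsSSYT (insW T w) ∧ EntriesIn (insW T w) m ∧
    (∀ j, part (shape T) j ≤ part (shape (insW T w)) j) ∧
    (shape (insW T w)).sum = (shape T).sum + w.length ∧
    ((boxList T w).map Prod.snd).IsChain (· < ·) ∧
    (∀ p ∈ boxList T w, part (shape T) p.1 ≤ p.2 ∧ p.2 < part (shape (insW T w)) p.1) ∧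
    (∀ ρ c, part (shape T) ρ ≤ c → c < part (shape (insW T w)) ρ → (ρ, c) ∈ boxList T w) := by
  intro w
  induction w with
  | nil =>
    intro T hT _ _ hE
    exact ⟨hT, hE, fun j => le_refl _, by simp [insW], by simp [boxList],
      by simp [boxList], fun ρ c h1 h2 => absurd (lt_of_le_of_lt h1 h2) (lt_irrefl _)⟩
  | cons a w ih =>
    intro T hT hsort hent hE
    obtain ⟨ha1, ham⟩ := hent a (by simp)
    obtain ⟨hS1, hIdx, hsh1, hE1⟩ := insert_step (m := m) hT a
    have hE1' := hE1 hE ha1 ham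
    have hidx_sh : insIdx T a ≤ (shape T).length := by rw [shape_length]; exact hIdx
    have hpart1 : ∀ j, part (shape (insertT T a)) j
        = part (shape T) j + if j = insIdx T a then 1 else 0 := by
      intro j
      rw [hsh1]
      exact part_addBox hidx_sh j
    obtain ⟨ihS, ihE, ihMono, ihSum, ihChain, ihBox, ihG⟩ :=
      ih hS1 (List.pairwise_cons.mp hsort).2 (fun c hc => hent c (by simp [hc])) hE1'
    rw [insW_cons]
    refine ⟨ihS, ihE, ?_, ?_, ?_, ?_, ?_⟩
    · intro j
      calc part (shape T) j ≤ part (shape (insertT T a)) j := by rw [hpart1]; omega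
        _ ≤ _ := ihMono j
    · rw [ihSum, hsh1, sum_addBox hidx_sh]
      simp
      omega
    · show ((boxList T (a :: w)).map Prod.snd).IsChain (· < ·)
      have hbl : boxList T (a :: w) = (insIdx T a, insCol T a) :: boxList (insertT T a) w := rfl
      rw [hbl, List.map_cons, List.isChain_cons]
      refine ⟨?_, ihChain⟩
      intro b hb
      cases w with
      | nil => simp [boxList] at hb
      | cons a₂ w₂ =>
        have hbl2 : boxList (insertT T a) (a₂ :: w₂)
            = (insIdx (insertT T a) a₂, insCol (insertT T a) a₂) :: boxList (insertT (insertT T a) a₂) w₂ := rfl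
        rw [hbl2] at hb
        simp only [List.map_cons, List.head?_cons, Option.mem_def, Option.some.injEq] at hb
        subst hb
        exact bump_right hT ((List.pairwise_cons.mp hsort).1 a₂ (by simp))
    · intro p hp
      have hbl : boxList T (a :: w) = (insIdx T a, insCol T a) :: boxList (insertT T a) w := rfl
      rw [hbl] at hp
      rcases List.mem_cons.mp hp with rfl | hp
      · refine ⟨le_refl _, ?_⟩
        have h1 : part (shape (insertT T a)) (insIdx T a) = insCol T a + 1 := by
          rw [hpart1]
          simp [insCol]
        have := ihMono (insIdx T a)
        show insCol T a < part (shape (insW (insertT T a) w)) (insIdx T a)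
        omega
      · obtain ⟨h1, h2⟩ := ihBox p hp
        refine ⟨le_trans (by rw [hpart1]; omega) h1, h2⟩
    · intro ρ c h1 h2
      have hbl : boxList T (a :: w) = (insIdx T a, insCol T a) :: boxList (insertT T a) w := rfl
      rw [hbl]
      rcases lt_or_ge c (part (shape (insertT T a)) ρ) with h3 | h3
      · have h4 := hpart1 ρ
        have hρ : ρ = insIdx T a := by
          by_contra hne
          rw [if_neg hne] at h4
          omega
        subst hρ
        have hc : c = insCol T a := by
          rw [if_pos rfl] at h4
          show c = part (shape T) (insIdx T a)
          omega
        subst hc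
        exact List.mem_cons_self
      · exact List.mem_cons_of_mem _ (ihG ρ c h3 h2)

/-- Inserting a weakly increasing word adds a horizontal strip. -/
lemma strip_of_insW {m : ℕ} {w : List ℕ} {T : List (List ℕ)} (hT : IsSSYT T)
    (hsort : w.Pairwise (· ≤ ·)) (hent : ∀ a ∈ w, 1 ≤ a ∧ a ≤ m) (hE : EntriesIn T m) :
    IsHStrip (shape T) (shape (insW T w)) := by
  obtain ⟨hS, hEw, hMono, hSum, hChain, hBox, hG⟩ := insW_spec hT hsort hent hE
  intro j
  refine ⟨?_, hMono j⟩
  by_contra hgt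
  push_neg at hgt
  set c := part (shape T) j with hc
  have h1 : (j+1, c) ∈ boxList T w := by
    refine hG (j+1) c ?_ hgt
    exact ssyt_part_mono hT (by omega)
  have h2 : (j, c) ∈ boxList T w := by
    refine hG j c (le_refl _) ?_
    calc c < part (shape (insW T w)) (j+1) := hgt
      _ ≤ part (shape (insW T w)) j := ssyt_part_succ_le hS j
  have := pairwise_snd_ne (List.isChain_iff_pairwise.mp hChain) _ h1 _ h2 (by simp)
  exact this rfl
/-- The weakly increasing word `1^{A 0} 2^{A 1} ⋯ r^{A (r-1)}`. -/
def wordOf {r : ℕ} (A : Fin r → ℕ) : List ℕ :=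
  (List.finRange r).flatMap fun i => List.replicate (A i) (i.val + 1)

lemma multiInsert_eq_insW {r : ℕ} (T : List (List ℕ)) (A : Fin r → ℕ) :
    multiInsert T A = insW T (wordOf A) := rfl

lemma wordOf_succ {r : ℕ} (A : Fin (r+1) → ℕ) :
    wordOf A = wordOf (A ∘ Fin.castSucc) ++ List.replicate (A (Fin.last r)) (r + 1) := by
  unfold wordOf
  rw [List.finRange_succ_last, List.flatMap_append, List.flatMap_map]
  simp [Function.comp]

lemma wordOf_length {r : ℕ} (A : Fin r → ℕ) : (wordOf A).length = ∑ i, A i := by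
  induction r with
  | zero => simp [wordOf]
  | succ r ih =>
    rw [wordOf_succ, List.length_append, ih, List.length_replicate, Fin.sum_univ_castSucc]
    rfl

lemma wordOf_sorted_mem {r : ℕ} (A : Fin r → ℕ) :
    (wordOf A).Pairwise (· ≤ ·) ∧ ∀ a ∈ wordOf A, 1 ≤ a ∧ a ≤ r := by
  induction r with
  | zero => exact ⟨by simp [wordOf], by simp [wordOf]⟩
  | succ r ih =>
    obtain ⟨ihs, ihm⟩ := ih (A ∘ Fin.castSucc)
    rw [wordOf_succ]
    constructor
    · refine List.pairwise_append.mpr ⟨ihs, ?_, ?_⟩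
      · rw [List.pairwise_replicate]
        right; rfl
      · intro a ha c hc
        rw [List.eq_of_mem_replicate hc]
        exact le_trans (ihm a ha).2 (by omega)
    · intro a ha
      rcases List.mem_append.mp ha with ha | ha
      · have := ihm a ha
        omega
      · rw [List.eq_of_mem_replicate ha]
        omega

lemma wordOf_nil {r : ℕ} (A : Fin r → ℕ) (h : ∀ i, A i = 0) : wordOf A = [] := by
  unfold wordOf
  rw [List.flatMap_eq_nil_iff]
  intro i _
  rw [h i]
  rfl

lemma wordOf_peel {r : ℕ} (A : Fin r → ℕ) (k : Fin r) (hk : A k ≠ 0)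
    (hmax : ∀ j, k < j → A j = 0) :
    wordOf A = wordOf (Function.update A k (A k - 1)) ++ [k.val + 1] := by
  induction r with
  | zero => exact absurd k.2 (by omega)
  | succ r ih =>
    rcases eq_or_ne k (Fin.last r) with rfl | hkl
    · rw [wordOf_succ, wordOf_succ (Function.update A (Fin.last r) (A (Fin.last r) - 1))]
      have h1 : (Function.update A (Fin.last r) (A (Fin.last r) - 1)) ∘ Fin.castSucc
          = A ∘ Fin.castSucc := by
        funext j
        exact Function.update_of_ne (by simp [Fin.ext_iff]; omega) _ _
      have h2 : Function.update A (Fin.last r) (A (Fin.last r) - 1) (Fin.last r)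
          = A (Fin.last r) - 1 := Function.update_self _ _ _
      rw [h1, h2]
      have h3 : A (Fin.last r) = (A (Fin.last r) - 1) + 1 := by omega
      conv_lhs => rw [h3]
      rw [List.replicate_succ']
      simp [Fin.val_last]
    · have hkr : k.val < r := by
        rcases lt_or_eq_of_le (Nat.lt_succ_iff.mp k.2) with h | h
        · exact h
        · exact absurd (Fin.ext h) hkl
      set k' : Fin r := ⟨k.val, hkr⟩ with hk'
      have hlast : A (Fin.last r) = 0 := hmax _ (by rw [Fin.lt_def]; simp [Fin.val_last]; omega)
      have hklast : Function.update A k (A k - 1) (Fin.last r) = 0 := by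
        rw [Function.update_of_ne (Ne.symm hkl)]
        exact hlast
      rw [wordOf_succ, wordOf_succ (Function.update A k (A k - 1)), hlast, hklast]
      simp only [List.replicate_zero, List.append_nil]
      have hcs : Fin.castSucc k' = k := by simp [Fin.ext_iff, hk']
      have hup : (Function.update A k (A k - 1)) ∘ Fin.castSucc
          = Function.update (A ∘ Fin.castSucc) k' ((A ∘ Fin.castSucc) k' - 1) := by
        funext j
        rcases eq_or_ne j k' with rfl | hj
        · show Function.update A k (A k - 1) (Fin.castSucc k')
              = Function.update (A ∘ Fin.castSucc) k' ((A ∘ Fin.castSucc) k' - 1) k'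
          rw [hcs, Function.update_self, Function.update_self, Function.comp_apply, hcs]
        · have hj2 : Fin.castSucc j ≠ k := by
            rw [← hcs]
            intro hc
            exact hj (Fin.castSucc_injective _ hc)
          simp only [Function.comp_apply, Function.update_of_ne hj2,
            Function.update_of_ne hj]
      rw [hup]
      have := ih (A ∘ Fin.castSucc) k' (by rwa [Function.comp_apply, hcs])
        (fun j hj => by
          rw [Function.comp_apply]
          apply hmax
          rw [Fin.lt_def] at hj ⊢
          simpa [hk'] using hj)
      rw [← this]
lemma part_set : ∀ {s : List ℕ} {i : ℕ}, i < s.length → ∀ (v ρ : ℕ),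
    part (s.set i v) ρ = if ρ = i then v else part s ρ := by
  intro s
  induction s with
  | nil => intro i hi; simp at hi
  | cons a s ih =>
    intro i hi v ρ
    match i with
    | 0 =>
      rw [List.set_cons_zero]
      cases ρ with
      | zero => simp [part_cons_zero]
      | succ ρ => simp [part_cons_succ]
    | (i+1) =>
      rw [List.set_cons_succ]
      cases ρ with
      | zero => simp [part_cons_zero]
      | succ ρ =>
        rw [part_cons_succ, part_cons_succ, ih (by simpa using hi)]
        simp [Nat.succ_inj]

lemma part_take : ∀ {s : List ℕ} {i ρ : ℕ},
    part (s.take i) ρ = if ρ < i then part s ρ else 0 := by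
  intro s i ρ
  rcases lt_or_ge ρ ((s.take i).length) with h | h
  · have h2 : ρ < i := by rw [List.length_take] at h; omega
    rw [if_pos h2]
    show (s.take i).getD ρ 0 = s.getD ρ 0
    exact (prefix_getD (List.take_prefix i s) h).symm
  · rw [part_eq_zero h]
    rw [List.length_take] at h
    rcases lt_or_ge ρ i with h3 | h3
    · rw [if_pos h3, part_eq_zero (by omega)]
    · rw [if_neg (by omega)]

lemma sum_parts : ∀ {s : List ℕ} {N : ℕ}, s.length ≤ N →
    ∑ i ∈ Finset.range N, part s i = s.sum := by
  intro s
  induction s with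
  | nil => intro N _; simp [part_nil]
  | cons a s ih =>
    intro N hN
    match N with
    | (N+1) =>
      rw [Finset.sum_range_succ']
      simp only [part_cons_succ, part_cons_zero]
      rw [ih (by simpa using hN), List.sum_cons]
      omega

lemma part_ext_pos : ∀ {s t : List ℕ}, (∀ x ∈ s, 0 < x) → (∀ x ∈ t, 0 < x) →
    (∀ i, part s i = part t i) → s = t := by
  intro s
  induction s with
  | nil =>
    intro t _ ht h
    cases t with
    | nil => rfl
    | cons b t =>
      have := h 0
      rw [part_nil, part_cons_zero] at this
      exact absurd (ht b (by simp)) (by omega)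
  | cons a s ih =>
    intro t hs ht h
    cases t with
    | nil =>
      have := h 0
      rw [part_nil, part_cons_zero] at this
      exact absurd (hs a (by simp)) (by omega)
    | cons b t =>
      have h0 := h 0
      rw [part_cons_zero, part_cons_zero] at h0
      subst h0
      congr 1
      exact ih (fun x hx => hs x (List.mem_cons_of_mem _ hx))
        (fun x hx => ht x (List.mem_cons_of_mem _ hx))
        (fun i => by have := h (i+1); rwa [part_cons_succ, part_cons_succ] at this)

lemma shape_pos {T : List (List ℕ)} (hT : IsSSYT T) : ∀ x ∈ shape T, 0 < x := by
  intro x hx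
  obtain ⟨row, hrow, rfl⟩ := List.mem_map.mp hx
  exact List.length_pos_iff.mpr (hT.1 row hrow).1

/-- The last box: inserting a sorted word `w ++ [y]`, the box of `y` is in the
least row that grew. -/
lemma last_box {m : ℕ} {T : List (List ℕ)} {w : List ℕ} {y : ℕ}
    (hT : IsSSYT T) (hsort : (w ++ [y]).Pairwise (· ≤ ·))
    (hent : ∀ a ∈ w ++ [y], 1 ≤ a ∧ a ≤ m) (hE : EntriesIn T m) :
    insW T (w ++ [y]) = insertT (insW T w) y ∧
    IsSSYT (insW T w) ∧
    part (shape T) (insIdx (insW T w) y) < part (shape (insW T (w ++ [y]))) (insIdx (insW T w) y) ∧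
    (∀ ρ, part (shape T) ρ < part (shape (insW T (w ++ [y]))) ρ → insIdx (insW T w) y ≤ ρ) ∧
    shape (insW T (w ++ [y])) = addBox (shape (insW T w)) (insIdx (insW T w) y) := by
  have hwsort : w.Pairwise (· ≤ ·) := hsort.sublist (List.sublist_append_left w [y])
  have hwent : ∀ a ∈ w, 1 ≤ a ∧ a ≤ m := fun a ha => hent a (by simp [ha])
  obtain ⟨hS, hEw, hMono, hSum, hChain, hBox, hG⟩ := insW_spec hT hwsort hwent hE
  obtain ⟨hSf, hEf, hMonof, hSumf, hChainf, hBoxf, hGf⟩ := insW_spec hT hsort hent hE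
  set S := insW T w with hSdef
  set i' := insIdx S y with hi'def
  have heq : insW T (w ++ [y]) = insertT S y := by rw [insW_append]; rfl
  obtain ⟨hS1, hIdx, hsh1, -⟩ := insert_step (m := m) hS y
  have hidx_sh : i' ≤ (shape S).length := by rw [shape_length]; exact hIdx
  have hpart1 : ∀ j, part (shape (insertT S y)) j
      = part (shape S) j + if j = i' then 1 else 0 := fun j => by
    rw [hsh1]; exact part_addBox hidx_sh j
  refine ⟨heq, hS, ?_, ?_, by rw [heq, hsh1]⟩
  · rw [heq, hpart1 i', if_pos rfl]
    have := hMono i'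
    omega
  · intro ρ hρ
    by_contra hcon
    push_neg at hcon
    rw [heq, hpart1 ρ, if_neg (by omega)] at hρ
    simp only [Nat.add_zero] at hρ
    -- row ρ grew already during `w`; it contains a box of column `part (shape S) ρ - 1`
    set c := part (shape S) ρ - 1 with hcdef
    have hbox : (ρ, c) ∈ boxList T w := by
      refine hG ρ c (by omega) (by omega)
    -- all boxes of `w` are strictly left of the last box
    have hfull : boxList T (w ++ [y]) = boxList T w ++ [(i', insCol S y)] := by
      rw [boxList_append]
      rfl
    have hpw := List.isChain_iff_pairwise.mp hChainf
    rw [hfull] at hpw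
    rw [List.map_append, List.pairwise_append] at hpw
    have hlt : c < insCol S y := by
      have := hpw.2.2 c (List.mem_map_of_mem hbox) (insCol S y) (by simp)
      exact this
    -- but the last box is weakly left of column `c`
    have hcol : insCol S y = part (shape S) i' := rfl
    have hmono2 : part (shape (insertT S y)) i' ≤ part (shape (insertT S y)) ρ :=
      ssyt_part_mono hS1 (by omega)
    rw [hpart1 i', if_pos rfl, hpart1 ρ, if_neg (by omega)] at hmono2
    omega
lemma exists_max_supp {r : ℕ} {A : Fin r → ℕ} (h : ∃ i, A i ≠ 0) :
    ∃ k : Fin r, A k ≠ 0 ∧ ∀ j, k < j → A j = 0 := by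
  classical
  set s := Finset.univ.filter (fun i => A i ≠ 0) with hs
  have hne : s.Nonempty := by
    obtain ⟨i, hi⟩ := h
    exact ⟨i, by simp [hs, hi]⟩
  refine ⟨s.max' hne, (Finset.mem_filter.mp (s.max'_mem hne)).2, fun j hj => ?_⟩
  by_contra hc
  have hmem : j ∈ s := by simp [hs, hc]
  exact absurd (Finset.le_max' s j hmem) (not_le.mpr hj)

lemma sum_update {r : ℕ} (A : Fin r → ℕ) (k : Fin r) (v : ℕ) :
    (∑ i, Function.update A k v i) + A k = (∑ i, A i) + v := by
  classical
  rw [Finset.sum_update_of_mem (Finset.mem_univ k),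
    Finset.sum_eq_add_sum_sdiff_singleton_of_mem (Finset.mem_univ k) A]
  omega

lemma pieri_inj {r : ℕ} : ∀ (l : ℕ) {lam : List ℕ} {T₁ T₂ : List (List ℕ)}
    {A₁ A₂ : Fin r → ℕ},
    IsSSYT T₁ → EntriesIn T₁ r → shape T₁ = lam → (∑ i, A₁ i) = l →
    IsSSYT T₂ → EntriesIn T₂ r → shape T₂ = lam → (∑ i, A₂ i) = l →
    multiInsert T₁ A₁ = multiInsert T₂ A₂ → T₁ = T₂ ∧ A₁ = A₂ := by
  intro l
  induction l with
  | zero =>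
    intro lam T₁ T₂ A₁ A₂ h1 h2 h3 h4 h5 h6 h7 h8 heq
    have hz1 : ∀ i, A₁ i = 0 := fun i => Finset.sum_eq_zero_iff.mp h4 i (Finset.mem_univ i)
    have hz2 : ∀ i, A₂ i = 0 := fun i => Finset.sum_eq_zero_iff.mp h8 i (Finset.mem_univ i)
    rw [multiInsert_eq_insW, multiInsert_eq_insW, wordOf_nil _ hz1, wordOf_nil _ hz2,
      insW_nil, insW_nil] at heq
    exact ⟨heq, funext fun i => (hz1 i).trans (hz2 i).symm⟩
  | succ l ih =>
    intro lam T₁ T₂ A₁ A₂ hS₁ hE₁ hsh₁ hsum₁ hS₂ hE₂ hsh₂ hsum₂ heq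
    rw [multiInsert_eq_insW, multiInsert_eq_insW] at heq
    have hx₁ : ∃ i, A₁ i ≠ 0 := by
      by_contra hc
      push_neg at hc
      rw [Finset.sum_eq_zero (fun i _ => hc i)] at hsum₁
      omega
    have hx₂ : ∃ i, A₂ i ≠ 0 := by
      by_contra hc
      push_neg at hc
      rw [Finset.sum_eq_zero (fun i _ => hc i)] at hsum₂
      omega
    obtain ⟨k₁, hk₁, hmax₁⟩ := exists_max_supp hx₁
    obtain ⟨k₂, hk₂, hmax₂⟩ := exists_max_supp hx₂
    set A₁' := Function.update A₁ k₁ (A₁ k₁ - 1) with hA₁'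
    set A₂' := Function.update A₂ k₂ (A₂ k₂ - 1) with hA₂'
    have hw₁ : wordOf A₁ = wordOf A₁' ++ [k₁.val + 1] := wordOf_peel _ _ hk₁ hmax₁
    have hw₂ : wordOf A₂ = wordOf A₂' ++ [k₂.val + 1] := wordOf_peel _ _ hk₂ hmax₂
    obtain ⟨ws₁, wm₁⟩ := wordOf_sorted_mem A₁
    obtain ⟨ws₂, wm₂⟩ := wordOf_sorted_mem A₂
    obtain ⟨heq₁, hSins₁, hgrow₁, hmin₁, hshape₁⟩ :=
      last_box (m := r) hS₁ (hw₁ ▸ ws₁) (hw₁ ▸ wm₁) hE₁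
    obtain ⟨heq₂, hSins₂, hgrow₂, hmin₂, hshape₂⟩ :=
      last_box (m := r) hS₂ (hw₂ ▸ ws₂) (hw₂ ▸ wm₂) hE₂
    rw [← hw₁] at heq₁ hgrow₁ hmin₁
    rw [← hw₂] at heq₂ hgrow₂ hmin₂
    set S₁ := insW T₁ (wordOf A₁') with hS₁def
    set S₂ := insW T₂ (wordOf A₂') with hS₂def
    set i₁ := insIdx S₁ (k₁.val + 1) with hi₁def
    set i₂ := insIdx S₂ (k₂.val + 1) with hi₂def
    rw [hsh₁] at hgrow₁ hmin₁
    rw [hsh₂] at hgrow₂ hmin₂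
    rw [heq] at hgrow₁ hmin₁
    have h12 : i₁ = i₂ := le_antisymm (hmin₁ i₂ hgrow₂) (hmin₂ i₁ hgrow₁)
    have hdel₁ : delT (insW T₂ (wordOf A₂)) i₁ = (S₁, k₁.val + 1) := by
      rw [← heq, heq₁]
      exact delT_insertT hSins₁ (k₁.val + 1)
    have hdel₂ : delT (insW T₂ (wordOf A₂)) i₁ = (S₂, k₂.val + 1) := by
      rw [h12, heq₂]
      exact delT_insertT hSins₂ (k₂.val + 1)
    rw [hdel₂] at hdel₁
    have hSeq : S₁ = S₂ := (congrArg Prod.fst hdel₁).symm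
    have hkval : k₂.val + 1 = k₁.val + 1 := congrArg Prod.snd hdel₁
    have hkeq : k₁ = k₂ := Fin.ext (by omega)
    have hsum₁' : (∑ i, A₁' i) = l := by
      have h := sum_update A₁ k₁ (A₁ k₁ - 1)
      rw [hsum₁, ← hA₁'] at h
      have hk1' : 1 ≤ A₁ k₁ := Nat.one_le_iff_ne_zero.mpr hk₁
      omega
    have hsum₂' : (∑ i, A₂' i) = l := by
      have h := sum_update A₂ k₂ (A₂ k₂ - 1)
      rw [hsum₂, ← hA₂'] at h
      have hk2' : 1 ≤ A₂ k₂ := Nat.one_le_iff_ne_zero.mpr hk₂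
      omega
    obtain ⟨hTeq, hAeq⟩ := ih hS₁ hE₁ hsh₁ hsum₁' hS₂ hE₂ hsh₂ hsum₂'
      (by rw [multiInsert_eq_insW, multiInsert_eq_insW]; exact hSeq)
    refine ⟨hTeq, funext fun i => ?_⟩
    have h₁ : A₁ i = if i = k₁ then A₁' i + 1 else A₁' i := by
      rw [hA₁']
      rcases eq_or_ne i k₁ with rfl | hne
      · rw [if_pos rfl, Function.update_self]
        have : 1 ≤ A₁ i := Nat.one_le_iff_ne_zero.mpr hk₁
        omega
      · rw [if_neg hne, Function.update_of_ne hne]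
    have h₂ : A₂ i = if i = k₂ then A₂' i + 1 else A₂' i := by
      rw [hA₂']
      rcases eq_or_ne i k₂ with rfl | hne
      · rw [if_pos rfl, Function.update_self]
        have : 1 ≤ A₂ i := Nat.one_le_iff_ne_zero.mpr hk₂
        omega
      · rw [if_neg hne, Function.update_of_ne hne]
    rw [h₁, h₂, hAeq, hkeq]

lemma pieri_surj {r : ℕ} : ∀ (l : ℕ) {lam : List ℕ}, IsShape lam →
    ∀ {T' : List (List ℕ)}, IsSSYT T' → EntriesIn T' r → IsHStrip lam (shape T') →
    (shape T').sum = lam.sum + l →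
    ∃ T A, (IsSSYT T ∧ EntriesIn T r ∧ shape T = lam ∧ (∑ i : Fin r, A i) = l) ∧
      multiInsert T A = T' := by
  intro l
  induction l with
  | zero =>
    intro lam hlam T' hT' hE' hstrip hsum
    have hshape_eq : shape T' = lam := by
      apply part_ext_pos (shape_pos hT') hlam.2
      set N := max (shape T').length lam.length with hN
      have h1 : ∑ i ∈ Finset.range N, part (shape T') i = (shape T').sum :=
        sum_parts (le_max_left _ _)
      have h2 : ∑ i ∈ Finset.range N, part lam i = lam.sum :=
        sum_parts (le_max_right _ _)
      have h3 : ∀ i ∈ Finset.range N, part lam i ≤ part (shape T') i :=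
        fun i _ => (hstrip i).2
      have h4 : ∀ i ∈ Finset.range N, part lam i = part (shape T') i := by
        rw [← Finset.sum_eq_sum_iff_of_le h3]
        rw [h1, h2, hsum]
        omega
      intro i
      rcases lt_or_ge i N with h | h
      · exact (h4 i (Finset.mem_range.mpr h)).symm
      · rw [part_eq_zero (by omega), part_eq_zero (by omega)]
    refine ⟨T', fun _ => 0, ⟨hT', hE', hshape_eq, by simp⟩, ?_⟩
    rw [multiInsert_eq_insW, wordOf_nil _ (fun _ => rfl), insW_nil]
  | succ l ih =>
    intro lam hlam T' hT' hE' hstrip hsum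
    set μ := shape T' with hμ
    have hex : ∃ i, part lam i < part μ i := by
      by_contra hc
      push_neg at hc
      have hall : ∀ i, part μ i = part lam i := fun i => le_antisymm (hc i) (hstrip i).2
      set N := max μ.length lam.length with hN
      have h1 : ∑ i ∈ Finset.range N, part μ i = μ.sum := sum_parts (le_max_left _ _)
      have h2 : ∑ i ∈ Finset.range N, part lam i = lam.sum := sum_parts (le_max_right _ _)
      have h3 : ∑ i ∈ Finset.range N, part μ i = ∑ i ∈ Finset.range N, part lam i :=
        Finset.sum_congr rfl (fun i _ => hall i)
      rw [h1, h2] at h3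
      omega
    have hi0 : part lam (Nat.find hex) < part μ (Nat.find hex) := Nat.find_spec hex
    set i0 := Nat.find hex with hi0def
    have hi0min : ∀ ρ < i0, part μ ρ ≤ part lam ρ := by
      intro ρ hρ
      have := Nat.find_min hex hρ
      omega
    have hμpos : 1 ≤ part μ i0 := by omega
    have hi0len : i0 < T'.length := by
      by_contra hc
      push_neg at hc
      rw [part_eq_zero (by rw [hμ, shape_length]; omega)] at hμpos
      omega
    have hcorner : part μ (i0+1) < part μ i0 := lt_of_le_of_lt (hstrip i0).1 hi0
    obtain ⟨hT''S, hins, hshape'', -, hent''⟩ := delT_spec hT' hi0len hcorner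
    rw [← hμ] at hshape''
    set T'' := (delT T' i0).1 with hT''def
    set x := (delT T' i0).2 with hxdef
    obtain ⟨hET'', hx1, hxr⟩ := hent'' r hE'
    set ν := shape T'' with hν
    have hνpart : ∀ ρ, part ν ρ = if ρ = i0 then part μ i0 - 1 else part μ ρ := by
      intro ρ
      rw [hshape'']
      by_cases h1 : part μ i0 = 1
      · rw [if_pos h1, part_take]
        rcases lt_trichotomy ρ i0 with h2 | rfl | h2
        · rw [if_pos h2, if_neg (by omega)]
        · rw [if_neg (lt_irrefl _), if_pos rfl]
          omega
        · rw [if_neg (by omega), if_neg (by omega)]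
          have h5 : part μ ρ ≤ part μ (i0+1) := ssyt_part_mono hT' (by omega)
          omega
      · rw [if_neg h1, part_set (show i0 < μ.length by rw [hμ, shape_length]; exact hi0len)]
    have hstrip' : IsHStrip lam ν := by
      intro j
      constructor
      · refine le_trans ?_ (hstrip j).1
        rw [hνpart]
        rcases eq_or_ne (j+1) i0 with h | h
        · rw [if_pos h, ← h]
          omega
        · rw [if_neg h]
      · rw [hνpart]
        rcases eq_or_ne j i0 with rfl | hne
        · rw [if_pos rfl]
          omega
        · rw [if_neg hne]
          exact (hstrip j).2
    have hsum' : ν.sum = lam.sum + l := by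
      set N := max ν.length μ.length with hN
      have h1 : ∑ i ∈ Finset.range N, part ν i = ν.sum := sum_parts (le_max_left _ _)
      have h2 : ∑ i ∈ Finset.range N, part μ i = μ.sum := sum_parts (le_max_right _ _)
      have h3 : ∀ i ∈ Finset.range N, part ν i + (if i = i0 then 1 else 0) = part μ i := by
        intro i _
        rw [hνpart]
        rcases eq_or_ne i i0 with rfl | hne
        · rw [if_pos rfl, if_pos rfl]
          omega
        · rw [if_neg hne, if_neg hne]
          omega
      have h4 : (∑ i ∈ Finset.range N, part ν i)
          + (∑ i ∈ Finset.range N, (if i = i0 then 1 else 0)) = ∑ i ∈ Finset.range N, part μ i := by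
        rw [← Finset.sum_add_distrib]
        exact Finset.sum_congr rfl h3
      have h5 : (∑ i ∈ Finset.range N, (if i = i0 then (1:ℕ) else 0)) = 1 := by
        rw [Finset.sum_ite_eq' (Finset.range N) i0 (fun _ => (1:ℕ))]
        rw [if_pos]
        rw [Finset.mem_range]
        have : i0 < μ.length := by rw [hμ, shape_length]; exact hi0len
        omega
      rw [h1, h2] at h4
      rw [h5] at h4
      omega
    obtain ⟨T, A', ⟨hTS, hTE, hTsh, hsumA'⟩, hmul⟩ := ih hlam hT''S hET'' hstrip' hsum'
    obtain ⟨hT'S2, hjxle, hshT', -⟩ := insert_step (m := r) hT''S x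
    set jx := insIdx T'' x with hjxdef
    have hμshape : μ = addBox ν jx := by
      rw [hμ, ← hins, hshT']
    have hjx : jx = i0 := by
      by_contra hne
      have h1 : part μ jx = part ν jx + 1 := by
        rw [hμshape, part_addBox (by rw [hν, shape_length]; exact hjxle) jx]
        simp
      rw [hνpart, if_neg hne] at h1
      omega
    have hxmax : ∀ j : Fin r, A' j ≠ 0 → j.val + 1 ≤ x := by
      intro j hj
      by_contra hcon
      push_neg at hcon
      obtain ⟨k, hk, hkmax⟩ := exists_max_supp ⟨j, hj⟩
      have hjk : j ≤ k := by
        by_contra hc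
        push_neg at hc
        exact hj (hkmax j hc)
      have hw' : wordOf A' = wordOf (Function.update A' k (A' k - 1)) ++ [k.val+1] :=
        wordOf_peel _ _ hk hkmax
      obtain ⟨ws', wm'⟩ := wordOf_sorted_mem A'
      obtain ⟨heqw, hS'S, hgroww, hminw, hshapew⟩ :=
        last_box (m := r) hTS (hw' ▸ ws') (hw' ▸ wm') hTE
      rw [← hw'] at heqw
      set S' := insW T (wordOf (Function.update A' k (A' k - 1))) with hS'def
      set i' := insIdx S' (k.val + 1) with hi'def
      have hT''eq : T'' = insertT S' (k.val + 1) := by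
        rw [← hmul, multiInsert_eq_insW, heqw]
      have hxk : x < k.val + 1 := by
        have : j.val ≤ k.val := hjk
        omega
      have hbl := bump_left hS'S (x := k.val + 1) (y := x) hxk
      rw [← hT''eq] at hbl
      have hLHS : insCol T'' x = part μ i0 - 1 := by
        show part ν jx = _
        rw [hνpart, if_pos hjx]
      set c' := insCol S' (k.val + 1) with hc'def
      have hbm : (i', c') ∈ boxList T (wordOf A') := by
        have hsingle : boxList S' [k.val + 1] = [(i', c')] := rfl
        rw [hw', boxList_append, hsingle]
        exact List.mem_append_right _ (List.mem_singleton_self _)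
      obtain ⟨-, -, -, -, -, hBoxA', -⟩ := insW_spec (m := r) hTS ws' wm' hTE
      obtain ⟨hb1, hb2⟩ := hBoxA' (i', c') hbm
      dsimp only at hb1 hb2
      rw [hTsh] at hb1
      have hins2 : insW T (wordOf A') = T'' := by
        rw [← multiInsert_eq_insW]
        exact hmul
      have hb2' : c' < part ν i' := by
        rw [hins2] at hb2
        exact hb2
      have hii0 : i0 ≤ i' := by
        by_contra hc
        push_neg at hc
        have h1 : part ν i' = part μ i' := by rw [hνpart, if_neg (by omega)]
        have h2 : part μ i' ≤ part lam i' := hi0min i' hc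
        omega
      have h3 : part ν i' ≤ part ν i0 := ssyt_part_mono hT''S hii0
      have h4 : part ν i0 = part μ i0 - 1 := by rw [hνpart, if_pos rfl]
      rw [hLHS] at hbl
      omega
    set kx : Fin r := ⟨x - 1, by omega⟩ with hkxdef
    set A : Fin r → ℕ := Function.update A' kx (A' kx + 1) with hAdef
    have hAkx : A kx = A' kx + 1 := Function.update_self _ _ _
    have hAne : ∀ i, i ≠ kx → A i = A' i := fun i hi => Function.update_of_ne hi _ _
    have hwA : wordOf A = wordOf A' ++ [x] := by
      have h1 : A kx ≠ 0 := by rw [hAkx]; omega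
      have h2 : ∀ j, kx < j → A j = 0 := by
        intro j hj
        rw [hAne j (ne_of_gt hj)]
        by_contra hc
        have := hxmax j hc
        have hjv : kx.val < j.val := hj
        rw [hkxdef] at hjv
        simp only [] at hjv
        omega
      have h3 := wordOf_peel A kx h1 h2
      rw [h3]
      have h4 : Function.update A kx (A kx - 1) = A' := by
        funext i
        rcases eq_or_ne i kx with rfl | hne
        · rw [Function.update_self, hAkx]
          omega
        · rw [Function.update_of_ne hne, hAne i hne]
      rw [h4]
      have h5 : kx.val + 1 = x := by
        rw [hkxdef]
        simp only []
        omega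
      rw [h5]
    refine ⟨T, A, ⟨hTS, hTE, hTsh, ?_⟩, ?_⟩
    · have h := sum_update A' kx (A' kx + 1)
      rw [← hAdef, hsumA'] at h
      omega
    · rw [multiInsert_eq_insW, hwA, insW_append]
      show insertT (insW T (wordOf A')) x = T'
      rw [← multiInsert_eq_insW, hmul]
      exact hins
/-- **Pieri rule for tableaux.** For a partition `λ` with at most `r`
parts and `l ∈ ℕ`, the map sending a pair `(T, A)` with `T ∈ SSYT_r(λ)` and `A ∈ ℕ^r`,
`Σ A_i = l`, to the tableau obtained by row-inserting `1` exactly `A_1` times, then `2`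
exactly `A_2` times, ..., then `r` exactly `A_r` times, is a bijection onto
`⊔_μ SSYT_r(μ)`, `μ` ranging over partitions obtained from `λ` by adding `l` boxes,
no two in the same column. -/
theorem pieri_bij (r l : ℕ) (lam : List ℕ) (hlam : IsShape lam)
    (hlen : lam.length ≤ r) :
    Set.BijOn (fun p : List (List ℕ) × (Fin r → ℕ) => multiInsert p.1 p.2)
      {p | IsSSYT p.1 ∧ EntriesIn p.1 r ∧ shape p.1 = lam ∧ ∑ i, p.2 i = l}
      {T' | IsSSYT T' ∧ EntriesIn T' r ∧ IsHStrip lam (shape T') ∧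
        (shape T').sum = lam.sum + l} := by
  refine ⟨?_, ?_, ?_⟩
  · rintro ⟨T, A⟩ ⟨hS, hE, hsh, hsum⟩
    obtain ⟨ws, wm⟩ := wordOf_sorted_mem A
    obtain ⟨h1, h2, h3, h4, -, -, -⟩ := insW_spec (m := r) hS ws wm hE
    refine ⟨h1, h2, ?_, ?_⟩
    · show IsHStrip lam (shape (multiInsert T A))
      rw [multiInsert_eq_insW, ← hsh]
      exact strip_of_insW hS ws wm hE
    · show (shape (multiInsert T A)).sum = lam.sum + l
      rw [multiInsert_eq_insW, h4, hsh, wordOf_length, hsum]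
  · rintro ⟨T₁, A₁⟩ h₁ ⟨T₂, A₂⟩ h₂ heq
    obtain ⟨hT, hA⟩ := pieri_inj l h₁.1 h₁.2.1 h₁.2.2.1 h₁.2.2.2
      h₂.1 h₂.2.1 h₂.2.2.1 h₂.2.2.2 heq
    rw [Prod.ext_iff]
    exact ⟨hT, hA⟩
  · rintro T' ⟨h1, h2, h3, h4⟩
    obtain ⟨T, A, hdom, hmul⟩ := pieri_surj l hlam h1 h2 h3 h4
    exact ⟨(T, A), hdom, hmul⟩

end RSKPaper
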